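/- arXiv:1802.08502 — 7 statements merged into one kernel-verified Lean document; each statement's English description precedes it below -/
import Mathlib

section
/- Let X₀, R₀⁺ be real numbers, (Rᵢ⁺)_{i≥1}, (R_N⁻)_{N≥1} real sequences, S_t = X₀ + Σ_{i=0}^{t−1} Rᵢ⁺, X_N = S_N − R_N⁻, and π_N = (1/N)·Σ_{t=1}^{N} S_t − X_N. Fix N ≥ 3 and suppose π_{N−1} = 0, π_N = 0, and the martingale condition P_{N−1}·R_{N−1}⁺ = (1 − P_{N−1})·R_{N−1}⁻ holds for some P_{N−1} with 0 < P_{N−1} < 1. Then N·R_N⁻ = (N−1)·R_{N−1}⁻ / P_{N−1}. -/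
/-- Combining the fair-pricing conditions `π_{N−1} = 0`, `π_N = 0`
with the martingale condition at step `N − 1` yields the recursion
`N·R_N⁻ = (N−1)·R_{N−1}⁻ / P_{N−1}`. -/
theorem stmt_2 (X₀ : ℝ) (Rp Rm S X π P : ℕ → ℝ)
    (hS : ∀ t : ℕ, 1 ≤ t → S t = X₀ + ∑ i ∈ Finset.range t, Rp i)
    (hX : ∀ N : ℕ, 1 ≤ N → X N = S N - Rm N)
    (hπ : ∀ N : ℕ, 1 ≤ N →
      π N = (1 / (N : ℝ)) * (∑ t ∈ Finset.Icc 1 N, S t) - X N)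
    (N : ℕ) (hN : 3 ≤ N)
    (hπN1 : π (N - 1) = 0) (hπN : π N = 0)
    (hPpos : 0 < P (N - 1)) (hPlt : P (N - 1) < 1)
    (hmart : P (N - 1) * Rp (N - 1) = (1 - P (N - 1)) * Rm (N - 1)) :
    (N : ℝ) * Rm N = ((N : ℝ) - 1) * Rm (N - 1) / P (N - 1) := by
  obtain ⟨n, rfl⟩ : ∃ n, N = n + 1 := ⟨N - 1, by omega⟩
  have hsub : n + 1 - 1 = n := rfl
  rw [hsub] at hπN1 hPpos hPlt hmart ⊢
  have hn1 : 1 ≤ n := by omega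
  have e1 := hπ n hn1
  have e2 := hπ (n + 1) (by omega)
  have hXn := hX n hn1
  have hXn1 := hX (n + 1) (by omega)
  have hstep : S (n + 1) = S n + Rp n := by
    rw [hS n hn1, hS (n + 1) (by omega), Finset.sum_range_succ]; ring
  have hsum : ∑ t ∈ Finset.Icc 1 (n + 1), S t
      = (∑ t ∈ Finset.Icc 1 n, S t) + S (n + 1) := by
    rw [Finset.sum_Icc_succ_top (by omega)]
  rw [e1, hXn] at hπN1
  rw [e2, hXn1, hsum, hstep] at hπN
  set T := ∑ t ∈ Finset.Icc 1 n, S t with hT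
  have hnpos : (0 : ℝ) < n := by exact_mod_cast hn1
  have hP : P n ≠ 0 := ne_of_gt hPpos
  have hA : T = (n : ℝ) * (S n - Rm n) := by
    field_simp at hπN1
    linarith [hπN1]
  have hB : T + (S n + Rp n) = ((n : ℝ) + 1) * (S n + Rp n - Rm (n + 1)) := by
    have hn1pos : ((n : ℝ) + 1) ≠ 0 := by positivity
    field_simp at hπN
    push_cast at hπN
    linarith [hπN]
  push_cast
  field_simp
  nlinarith [hA, hB, hmart, mul_pos hnpos hPpos]
end

section
/- Let β > 0 and define Z(a) = Σ_{n=0}^{∞} (n + a)^{−(1+β)} for real a ≥ 1, and P_t = Z(t+1)/Z(t). Then the error 1 − P_t − β/t is O(1/t²) as t → ∞; that is, there exist C > 0 and T such that |1 − Z(t+1)/Z(t) − β/t| ≤ C/t² for all integers t ≥ T. -/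
open Real Filter Finset

private lemma stmt11_key {β : ℝ} (hβ : 0 < β) {x : ℝ} (hx : 1 ≤ x) :
    β * (x + 1) ^ (-(1 + β)) ≤ x ^ (-β) - (x + 1) ^ (-β) ∧
      x ^ (-β) - (x + 1) ^ (-β) ≤ β * x ^ (-(1 + β)) := by
  have hx0 : (0 : ℝ) < x := lt_of_lt_of_le one_pos hx
  obtain ⟨c, hc, hceq⟩ :=
    exists_hasDerivAt_eq_slope (fun u : ℝ => u ^ (-β)) (fun u => (-β) * u ^ (-β - 1))
      (by linarith : x < x + 1)
      (fun u hu => by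
        have hu0 : u ≠ 0 := by
          have := hu.1; intro h; rw [h] at this; linarith
        exact (Real.hasDerivAt_rpow_const (Or.inl hu0)).continuousAt.continuousWithinAt)
      (fun u hu => by
        have hu0 : u ≠ 0 := by
          have := hu.1; intro h; rw [h] at this; linarith
        exact Real.hasDerivAt_rpow_const (Or.inl hu0))
  have hc0 : 0 < c := lt_trans hx0 hc.1
  have hceq' : x ^ (-β) - (x + 1) ^ (-β) = β * c ^ (-(1 + β)) := by
    have h1 : x + 1 - x = 1 := by ring
    rw [h1, div_one] at hceq
    have h2 : -β - 1 = -(1 + β) := by ring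
    rw [h2] at hceq
    linarith
  constructor
  · rw [hceq']
    have := Real.rpow_le_rpow_of_nonpos hc0 hc.2.le (by linarith : -(1 + β) ≤ 0)
    nlinarith
  · rw [hceq']
    have := Real.rpow_le_rpow_of_nonpos hx0 hc.1.le (by linarith : -(1 + β) ≤ 0)
    nlinarith

private lemma stmt11_summable {β : ℝ} (hβ : 0 < β) {a : ℝ} (ha : 1 ≤ a) :
    Summable (fun n : ℕ => ((n : ℝ) + a) ^ (-(1 + β))) := by
  have h0 : Summable (fun n : ℕ => ((n : ℝ)) ^ (-(1 + β))) :=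
    (Real.summable_nat_rpow (p := -(1 + β))).2 (by linarith)
  have h1 : Summable (fun n : ℕ => (((n + 1 : ℕ) : ℝ)) ^ (-(1 + β))) :=
    (summable_nat_add_iff 1).2 h0
  have h1' : Summable (fun n : ℕ => ((n : ℝ) + 1) ^ (-(1 + β))) := by
    convert h1 using 2 with n
    push_cast; ring
  refine Summable.of_nonneg_of_le (fun n => Real.rpow_nonneg (by positivity) _)
    (fun n => ?_) h1'
  exact Real.rpow_le_rpow_of_nonpos (by positivity) (by linarith) (by linarith)

private lemma stmt11_bounds {β : ℝ} (hβ : 0 < β) {x : ℝ} (hx : 1 ≤ x) :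
    x ^ (-β) ≤ β * ∑' n : ℕ, ((n : ℝ) + x) ^ (-(1 + β)) ∧
      β * ∑' n : ℕ, ((n : ℝ) + (x + 1)) ^ (-(1 + β)) ≤ x ^ (-β) := by
  have hx0 : (0 : ℝ) < x := lt_of_lt_of_le one_pos hx
  set f : ℕ → ℝ := fun n => ((n : ℝ) + x) ^ (-β) with hf
  have hcast : ∀ n : ℕ, (((n + 1 : ℕ) : ℝ) + x) = ((n : ℝ) + x) + 1 := by
    intro n; push_cast; ring
  have hy : ∀ n : ℕ, 1 ≤ (n : ℝ) + x := fun n => by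
    have : (0 : ℝ) ≤ (n : ℝ) := Nat.cast_nonneg n
    linarith
  have hnn : ∀ n : ℕ, 0 ≤ f n - f (n + 1) := by
    intro n
    have := (stmt11_key hβ (hy n)).1
    have hpos : 0 ≤ β * (((n : ℝ) + x) + 1) ^ (-(1 + β)) := by positivity
    simp only [hf, hcast n]
    linarith
  have tele : HasSum (fun n => f n - f (n + 1)) (x ^ (-β)) := by
    rw [hasSum_iff_tendsto_nat_of_nonneg hnn]
    have hps : ∀ N : ℕ, ∑ i ∈ range N, (f i - f (i + 1)) = f 0 - f N := fun N =>
      Finset.sum_range_sub' f N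
    have hf0 : f 0 = x ^ (-β) := by simp [hf]
    have hlim : Tendsto (fun N : ℕ => f N) atTop (nhds 0) := by
      have h1 : Tendsto (fun N : ℕ => (N : ℝ) + x) atTop atTop :=
        tendsto_atTop_add_const_right _ x tendsto_natCast_atTop_atTop
      exact (tendsto_rpow_neg_atTop hβ).comp h1
    have h3 : Tendsto (fun N : ℕ => f 0 - f N) atTop (nhds (f 0 - 0)) :=
      tendsto_const_nhds.sub hlim
    rw [sub_zero] at h3
    have h4 := h3.congr (fun N => (hps N).symm)
    rwa [hf0] at h4
  have hs : Summable (fun n : ℕ => ((n : ℝ) + x) ^ (-(1 + β))) := stmt11_summable hβ hx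
  have hs' : Summable (fun n : ℕ => ((n : ℝ) + (x + 1)) ^ (-(1 + β))) :=
    stmt11_summable hβ (by linarith)
  constructor
  · calc x ^ (-β) = ∑' n : ℕ, (f n - f (n + 1)) := tele.tsum_eq.symm
      _ ≤ ∑' n : ℕ, β * ((n : ℝ) + x) ^ (-(1 + β)) := by
          refine Summable.tsum_le_tsum (fun n => ?_) tele.summable (hs.mul_left β)
          have := (stmt11_key hβ (hy n)).2
          simp only [hf, hcast n]
          linarith
      _ = β * ∑' n : ℕ, ((n : ℝ) + x) ^ (-(1 + β)) := tsum_mul_left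
  · calc β * ∑' n : ℕ, ((n : ℝ) + (x + 1)) ^ (-(1 + β))
        = ∑' n : ℕ, β * ((n : ℝ) + (x + 1)) ^ (-(1 + β)) := tsum_mul_left.symm
      _ ≤ ∑' n : ℕ, (f n - f (n + 1)) := by
          refine Summable.tsum_le_tsum (fun n => ?_) (hs'.mul_left β) tele.summable
          have := (stmt11_key hβ (hy n)).1
          simp only [hf, hcast n]
          have harr : (n : ℝ) + (x + 1) = ((n : ℝ) + x) + 1 := by ring
          rw [harr]
          linarith
      _ = x ^ (-β) := tele.tsum_eq

/-- With `Z a = ∑_{n≥0} (n+a)^{−(1+β)}` and `P_t = Z(t+1)/Z(t)`,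
the error `1 − P_t − β/t` is `O(1/t²)` as `t → ∞`: there exist `C > 0` and `T`
such that `|1 − Z(t+1)/Z(t) − β/t| ≤ C/t²` for all integers `t ≥ T`. -/
theorem stmt_11 (β : ℝ) (hβ : 0 < β)
    (Z : ℝ → ℝ)
    (hZ : ∀ a : ℝ, 1 ≤ a → Z a = ∑' n : ℕ, ((n : ℝ) + a) ^ (-(1 + β))) :
    ∃ C : ℝ, 0 < C ∧ ∃ T : ℕ, ∀ t : ℕ, T ≤ t →
      |1 - Z ((t : ℝ) + 1) / Z t - β / t| ≤ C / (t : ℝ) ^ 2 := by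
  refine ⟨β ^ 2, by positivity, 1, fun t ht => ?_⟩
  set x : ℝ := (t : ℝ) with hxdef
  have hx : (1 : ℝ) ≤ x := by rw [hxdef]; exact_mod_cast ht
  have hx0 : (0 : ℝ) < x := lt_of_lt_of_le one_pos hx
  have hZx := hZ x hx
  have hZx1 := hZ (x + 1) (by linarith)
  set A := Z x with hA
  set B := Z (x + 1) with hB
  set D := x ^ (-(1 + β)) with hD
  set u := x ^ (-β) with hu
  have hDpos : 0 < D := Real.rpow_pos_of_pos hx0 _
  have hupos : 0 < u := Real.rpow_pos_of_pos hx0 _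
  have hbounds := stmt11_bounds hβ hx
  have h1 : u ≤ β * A := by rw [hu, hZx]; exact hbounds.1
  have h2 : β * B ≤ u := by rw [hu, hZx1]; exact hbounds.2
  have hAB : A = D + B := by
    rw [hZx, hZx1, hD]
    have hsum : Summable (fun n : ℕ => ((n : ℝ) + x) ^ (-(1 + β))) := stmt11_summable hβ hx
    rw [Summable.tsum_eq_zero_add hsum]
    congr 1
    · norm_num
    · refine tsum_congr fun n => ?_
      congr 1
      push_cast; ring
  have hApos : 0 < A := by nlinarith
  have hDx : D * x = u := by
    rw [hD, hu]
    have : -β = -(1 + β) + 1 := by ring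
    rw [this, Real.rpow_add hx0, Real.rpow_one]
  have hx2 : (0 : ℝ) < x ^ 2 := by positivity
  have hquot : 1 - B / A = D / A := by
    field_simp
    linarith [hAB]
  rw [hquot]
  have hmain1 : D / A - β / x ≤ 0 := by
    rw [sub_nonpos, div_le_div_iff₀ hApos hx0]
    linarith [hDx]
  have hmain2 : β / x - D / A ≤ β ^ 2 / x ^ 2 := by
    have e2 : β / x - D / A = (β * A - u) / (x * A) := by
      rw [← hDx]; field_simp
    rw [e2, div_le_div_iff₀ (by positivity) hx2]
    have hnum : β * A - u ≤ β * D := by nlinarith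
    have s1 : (β * A - u) * x ^ 2 ≤ β * D * x ^ 2 :=
      mul_le_mul_of_nonneg_right hnum hx2.le
    have s2 : β * D * x ^ 2 = β * x * u := by rw [← hDx]; ring
    have s3 : β * x * u ≤ β * x * (β * A) :=
      mul_le_mul_of_nonneg_left h1 (by positivity)
    nlinarith [s1, s2, s3]
  rw [abs_le]
  constructor <;> nlinarith
end

section
/- Let β > 0, Z(a) = Σ_{n=0}^{∞} (n + a)^{−(1+β)} for real a ≥ 1, R₁⁺ ∈ ℝ, and for t ≥ 2 let R_t⁺ = (1/t^{2+β}) · Z(1)/(Z(t)·Z(t+1)) · R₁⁺. Then lim_{t→∞} t^{2−β} · R_t⁺ = β²·Z(1)·R₁⁺; that is, R_t⁺ decays like a constant multiple of t^{−(2−β)}. -/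
open Filter Real Topology

-- MVT step
lemma mvt_step (β : ℝ) (hβ : 0 < β) (x : ℝ) (hx : 0 < x) :
    ∃ c ∈ Set.Ioo x (x + 1), x ^ (-β) - (x + 1) ^ (-β) = β * c ^ (-(1 + β)) := by
  have hab : x < x + 1 := by linarith
  obtain ⟨c, hc, hceq⟩ := exists_hasDerivAt_eq_slope (fun y : ℝ => y ^ (-β))
      (fun y : ℝ => -β * y ^ (-β - 1)) hab
      (by
        apply ContinuousOn.rpow_const continuousOn_id
        intro y hy
        rw [Set.mem_Icc] at hy
        exact Or.inl (ne_of_gt (by simp only [id_eq]; nlinarith [hy.1])))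
      (fun y hy => Real.hasDerivAt_rpow_const (Or.inl (by rw [Set.mem_Ioo] at hy; nlinarith [hy.1])))
  refine ⟨c, hc, ?_⟩
  have h1 : -β - 1 = -(1 + β) := by ring
  rw [h1] at hceq
  have h2 : x + 1 - x = 1 := by ring
  rw [h2, div_one] at hceq
  nlinarith [hceq]

lemma zeta_bounds (β : ℝ) (hβ : 0 < β) (a : ℝ) (ha : 1 ≤ a) :
    Summable (fun n : ℕ => ((n : ℝ) + a) ^ (-(1 + β))) ∧
    a ^ (-β) / β ≤ (∑' n : ℕ, ((n : ℝ) + a) ^ (-(1 + β))) ∧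
    (∑' n : ℕ, ((n : ℝ) + a) ^ (-(1 + β))) ≤ a ^ (-(1 + β)) + a ^ (-β) / β := by
  have ha0 : 0 < a := by linarith
  set f : ℕ → ℝ := fun n => ((n : ℝ) + a) ^ (-(1 + β)) with hf
  set g : ℕ → ℝ := fun n => ((n : ℝ) + a) ^ (-β) with hg
  have hpos : ∀ n : ℕ, (0 : ℝ) < (n : ℝ) + a := fun n => by positivity
  have hfpos : ∀ n : ℕ, 0 < f n := fun n => Real.rpow_pos_of_pos (hpos n) _
  -- telescoping has sum
  have hgnn : ∀ n, 0 ≤ g n - g (n + 1) := by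
    intro n
    have : g (n + 1) ≤ g n := by
      apply Real.rpow_le_rpow_of_nonpos (hpos n) (by push_cast; linarith) (by linarith)
    linarith
  have hgt : Tendsto g atTop (𝓝 0) := by
    apply (tendsto_rpow_neg_atTop hβ).comp
    apply tendsto_atTop_add_const_right
    exact tendsto_natCast_atTop_atTop
  have hd : HasSum (fun n => g n - g (n + 1)) (g 0) := by
    rw [hasSum_iff_tendsto_nat_of_nonneg hgnn]
    have : ∀ N : ℕ, ∑ i ∈ Finset.range N, (g i - g (i + 1)) = g 0 - g N :=
      fun N => Finset.sum_range_sub' g N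
    simp only [this]
    simpa using tendsto_const_nhds.sub hgt
  -- termwise MVT bounds
  have hkey : ∀ n : ℕ, β * f (n + 1) ≤ g n - g (n + 1) ∧ g n - g (n + 1) ≤ β * f n := by
    intro n
    obtain ⟨c, hc, hceq⟩ := mvt_step β hβ ((n : ℝ) + a) (hpos n)
    rw [Set.mem_Ioo] at hc
    have hgn : g n - g (n + 1) = β * c ^ (-(1 + β)) := by
      simp only [hg]
      push_cast
      rw [show ((n : ℝ) + 1 + a) = ((n : ℝ) + a) + 1 by ring]
      exact hceq
    constructor
    · rw [hgn]
      apply mul_le_mul_of_nonneg_left _ hβ.le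
      apply Real.rpow_le_rpow_of_nonpos ((hpos n).trans hc.1) (by push_cast; linarith [hc.2]) (by linarith)
    · rw [hgn]
      apply mul_le_mul_of_nonneg_left _ hβ.le
      apply Real.rpow_le_rpow_of_nonpos (hpos n) (by linarith [hc.1]) (by linarith)
  -- summability
  have hfs' : Summable (fun n => f (n + 1)) := by
    apply Summable.of_nonneg_of_le (fun n => (hfpos _).le)
      (fun n => ?_) (hd.summable.div_const β)
    rw [le_div_iff₀ hβ, mul_comm]
    exact (hkey n).1
  have hfs : Summable f := (summable_nat_add_iff 1).mp hfs'
  refine ⟨hfs, ?_, ?_⟩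
  · rw [div_le_iff₀ hβ, mul_comm]
    have : g 0 ≤ ∑' n, β * f n := by
      rw [← hd.tsum_eq]
      exact Summable.tsum_le_tsum (fun n => (hkey n).2) hd.summable (hfs.mul_left β)
    rw [tsum_mul_left] at this
    simpa [hg] using this
  · have h0 : ∑' n, f n = f 0 + ∑' n, f (n + 1) := Summable.tsum_eq_zero_add hfs
    have h1 : ∑' n, β * f (n + 1) ≤ g 0 := by
      rw [← hd.tsum_eq]
      exact Summable.tsum_le_tsum (fun n => (hkey n).1) (hfs'.mul_left β) hd.summable
    rw [tsum_mul_left] at h1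
    have h2 : ∑' n, f (n + 1) ≤ g 0 / β := by rwa [le_div_iff₀ hβ, mul_comm]
    have hg0 : g 0 = a ^ (-β) := by simp [hg]
    have hf0 : f 0 = a ^ (-(1 + β)) := by simp [hf]
    rw [h0, hf0]
    rw [hg0] at h2
    linarith

/-- The incremental impact
`R_t⁺ = (1/t^{2+β})·Z(1)/(Z(t)·Z(t+1))·R₁⁺` satisfies
`lim_{t→∞} t^{2−β}·R_t⁺ = β²·Z(1)·R₁⁺`, i.e. `R_t⁺` decays like a constant
multiple of `t^{−(2−β)}`. -/
theorem stmt_13 (β : ℝ) (hβ : 0 < β)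
    (Z : ℝ → ℝ)
    (hZ : ∀ a : ℝ, 1 ≤ a → Z a = ∑' n : ℕ, ((n : ℝ) + a) ^ (-(1 + β)))
    (R₁ : ℝ) (Rp : ℕ → ℝ)
    (hRp : ∀ t : ℕ, 2 ≤ t →
      Rp t = (1 / (t : ℝ) ^ (2 + β)) * (Z 1 / (Z t * Z ((t : ℝ) + 1))) * R₁) :
    Filter.Tendsto (fun t : ℕ => (t : ℝ) ^ (2 - β) * Rp t)
      Filter.atTop (nhds (β ^ 2 * Z 1 * R₁)) := by
  have hZb : ∀ a : ℝ, 1 ≤ a →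
      a ^ (-β) / β ≤ Z a ∧ Z a ≤ a ^ (-(1 + β)) + a ^ (-β) / β := by
    intro a ha
    rw [hZ a ha]
    exact ⟨(zeta_bounds β hβ a ha).2.1, (zeta_bounds β hβ a ha).2.2⟩
  -- lemma: for a ≥ 1, β⁻¹ ≤ a^β * Z a and a^β * Z a ≤ a⁻¹ + β⁻¹
  have key : ∀ a : ℝ, 1 ≤ a → β⁻¹ ≤ a ^ β * Z a ∧ a ^ β * Z a ≤ a⁻¹ + β⁻¹ := by
    intro a ha
    have ha0 : 0 < a := by linarith
    have hap : 0 < a ^ β := Real.rpow_pos_of_pos ha0 _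
    obtain ⟨hl, hu⟩ := hZb a ha
    have hcan : a ^ β * a ^ (-β) = 1 := by
      rw [← Real.rpow_add ha0]; simp
    have hcan2 : a ^ β * a ^ (-(1 + β)) = a⁻¹ := by
      rw [← Real.rpow_add ha0, show β + -(1 + β) = -1 by ring, Real.rpow_neg_one]
    constructor
    · have := mul_le_mul_of_nonneg_left hl hap.le
      calc β⁻¹ = a ^ β * (a ^ (-β) / β) := by
            rw [mul_div_assoc'] at *; rw [hcan]; ring
        _ ≤ a ^ β * Z a := this
    · have := mul_le_mul_of_nonneg_left hu hap.le
      calc a ^ β * Z a ≤ a ^ β * (a ^ (-(1 + β)) + a ^ (-β) / β) := this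
        _ = a⁻¹ + β⁻¹ := by rw [mul_add, hcan2, mul_div_assoc', hcan]; ring
  have hβinv : (β : ℝ)⁻¹ ≠ 0 := inv_ne_zero hβ.ne'
  -- limit 1 : t^β * Z t → β⁻¹
  have h1 : Tendsto (fun t : ℕ => (t : ℝ) ^ β * Z t) atTop (𝓝 β⁻¹) := by
    apply tendsto_of_tendsto_of_tendsto_of_le_of_le'
      (tendsto_const_nhds : Tendsto (fun _ : ℕ => (β : ℝ)⁻¹) atTop _)
      (h := fun t : ℕ => (t : ℝ)⁻¹ + β⁻¹)
    · have : Tendsto (fun t : ℕ => ((t : ℝ))⁻¹) atTop (𝓝 0) := by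
        exact tendsto_inv_atTop_zero.comp tendsto_natCast_atTop_atTop
      simpa using this.add tendsto_const_nhds
    · filter_upwards [eventually_ge_atTop 1] with t ht
      exact (key t (by exact_mod_cast ht)).1
    · filter_upwards [eventually_ge_atTop 1] with t ht
      exact (key t (by exact_mod_cast ht)).2
  -- limit 2 : t^β * Z (t+1) → β⁻¹
  have h2 : Tendsto (fun t : ℕ => (t : ℝ) ^ β * Z ((t : ℝ) + 1)) atTop (𝓝 β⁻¹) := by
    apply tendsto_of_tendsto_of_tendsto_of_le_of_le'
      (g := fun t : ℕ => ((t : ℝ) / ((t : ℝ) + 1)) ^ β * β⁻¹)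
      (h := fun t : ℕ => ((t : ℝ) + 1)⁻¹ + β⁻¹)
    · have hq : Tendsto (fun t : ℕ => (t : ℝ) / ((t : ℝ) + 1)) atTop (𝓝 1) := by
        have : ∀ t : ℕ, (t : ℝ) / ((t : ℝ) + 1) = 1 - ((t : ℝ) + 1)⁻¹ := by
          intro t
          have h0 : ((t : ℝ) + 1) ≠ 0 := by positivity
          field_simp
          ring
        simp only [this]
        have : Tendsto (fun t : ℕ => ((t : ℝ) + 1)⁻¹) atTop (𝓝 0) :=
          tendsto_inv_atTop_zero.comp (tendsto_atTop_add_const_right _ _ tendsto_natCast_atTop_atTop)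
        simpa using tendsto_const_nhds.sub this
      have hc : ContinuousAt (fun x : ℝ => x ^ β) 1 :=
        Real.continuousAt_rpow_const 1 β (Or.inl one_ne_zero)
      have := (hc.tendsto.comp hq).mul (tendsto_const_nhds : Tendsto (fun _ : ℕ => (β:ℝ)⁻¹) atTop _)
      simpa using this
    · have : Tendsto (fun t : ℕ => ((t : ℝ) + 1)⁻¹) atTop (𝓝 0) :=
        tendsto_inv_atTop_zero.comp (tendsto_atTop_add_const_right _ _ tendsto_natCast_atTop_atTop)
      simpa using this.add tendsto_const_nhds
    · filter_upwards [eventually_ge_atTop 1] with t ht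
      have ht1 : (1 : ℝ) ≤ (t : ℝ) := by exact_mod_cast ht
      have ht0 : (0 : ℝ) < (t : ℝ) := by linarith
      have hZl := (hZb ((t : ℝ) + 1) (by linarith)).1
      calc ((t : ℝ) / ((t : ℝ) + 1)) ^ β * β⁻¹
          = (t : ℝ) ^ β * (((t : ℝ) + 1) ^ (-β) / β) := by
            rw [Real.div_rpow ht0.le (by linarith), Real.rpow_neg (by linarith : (0:ℝ) ≤ (t:ℝ)+1)]
            field_simp
        _ ≤ (t : ℝ) ^ β * Z ((t : ℝ) + 1) :=
            mul_le_mul_of_nonneg_left hZl (Real.rpow_pos_of_pos ht0 _).le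
    · filter_upwards [eventually_ge_atTop 1] with t ht
      have ht1 : (1 : ℝ) ≤ (t : ℝ) := by exact_mod_cast ht
      have ht0 : (0 : ℝ) < (t : ℝ) := by linarith
      have hZnn : 0 ≤ Z ((t : ℝ) + 1) := by
        have := (hZb ((t : ℝ) + 1) (by linarith)).1
        have : (0:ℝ) ≤ ((t:ℝ)+1) ^ (-β) / β := by positivity
        linarith [(hZb ((t : ℝ) + 1) (by linarith)).1]
      calc (t : ℝ) ^ β * Z ((t : ℝ) + 1)
          ≤ ((t : ℝ) + 1) ^ β * Z ((t : ℝ) + 1) :=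
            mul_le_mul_of_nonneg_right
              (Real.rpow_le_rpow ht0.le (by linarith) hβ.le) hZnn
        _ ≤ ((t : ℝ) + 1)⁻¹ + β⁻¹ := (key ((t : ℝ) + 1) (by linarith)).2
  -- combine
  have hfinal : Tendsto (fun t : ℕ =>
      Z 1 * R₁ * (((t : ℝ) ^ β * Z t)⁻¹ * ((t : ℝ) ^ β * Z ((t : ℝ) + 1))⁻¹))
      atTop (𝓝 (β ^ 2 * Z 1 * R₁)) := by
    have := tendsto_const_nhds.mul ((h1.inv₀ hβinv).mul (h2.inv₀ hβinv))
      (f := fun _ : ℕ => Z 1 * R₁)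
    convert this using 2
    rw [inv_inv]
    ring
  apply hfinal.congr'
  filter_upwards [eventually_ge_atTop 2] with t ht
  rw [hRp t ht]
  set x : ℝ := (t : ℝ) with hx
  have hx0 : (0 : ℝ) < x := by
    have : (2 : ℝ) ≤ x := by rw [hx]; exact_mod_cast ht
    linarith
  have hsplit : x ^ (2 - β) * (1 / x ^ (2 + β)) = (x ^ β)⁻¹ * (x ^ β)⁻¹ := by
    rw [one_div, ← Real.rpow_neg hx0.le, ← Real.rpow_add hx0,
      show (2 - β) + -(2 + β) = -β + -β by ring, Real.rpow_add hx0,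
      Real.rpow_neg hx0.le]
  calc Z 1 * R₁ * ((x ^ β * Z x)⁻¹ * (x ^ β * Z (x + 1))⁻¹)
      = (x ^ (2 - β) * (1 / x ^ (2 + β))) * (Z 1 / (Z x * Z (x + 1))) * R₁ := by
        rw [hsplit, mul_inv, mul_inv, div_eq_mul_inv, mul_inv]
        ring
    _ = x ^ (2 - β) * (1 / x ^ (2 + β) * (Z 1 / (Z x * Z (x + 1))) * R₁) := by ring
end

section
/- Let β > 1, Z(a) = Σ_{n=0}^{∞} (n + a)^{−(1+β)} for real a ≥ 1, R₀⁺ ∈ ℝ, R₁⁺ > 0, and for k ≥ 2 let R_k⁺ = (1/k^{2+β}) · Z(1)/(Z(k)·Z(k+1)) · R₁⁺. Define the immediate impact 𝓘_t = R₀⁺ + R₁⁺ + Σ_{k=2}^{t−1} R_k⁺. Then lim_{t→∞} 𝓘_t / t^{β−1} = β²·Z(1)·R₁⁺ / (β − 1); in particular 𝓘_t grows like t^{β−1}. -/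
open Filter Finset Real Set Topology Asymptotics

/-- MVT inequalities for `x ↦ x^(-β)`. -/
lemma mvt_rpow {β : ℝ} (hβ : 0 < β) {x : ℝ} (hx : 0 < x) :
    β * (x + 1) ^ (-(1 + β)) ≤ x ^ (-β) - (x + 1) ^ (-β) ∧
      x ^ (-β) - (x + 1) ^ (-β) ≤ β * x ^ (-(1 + β)) := by
  have hx1 : x < x + 1 := by linarith
  have hcont : ContinuousOn (fun t : ℝ => t ^ (-β)) (Icc x (x + 1)) := by
    intro t ht
    exact (Real.continuousAt_rpow_const t (-β) (Or.inl (by nlinarith [ht.1]))).continuousWithinAt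
  have hderiv : ∀ t ∈ Ioo x (x + 1),
      HasDerivAt (fun t : ℝ => t ^ (-β)) (-β * t ^ (-β - 1)) t := fun t ht =>
    Real.hasDerivAt_rpow_const (Or.inl (by nlinarith [ht.1]))
  obtain ⟨c, hc, hceq⟩ := exists_hasDerivAt_eq_slope (fun t : ℝ => t ^ (-β))
    (fun t => -β * t ^ (-β - 1)) hx1 hcont hderiv
  have hc0 : 0 < c := lt_trans hx hc.1
  have key : x ^ (-β) - (x + 1) ^ (-β) = β * c ^ (-β - 1) := by
    have : -β * c ^ (-β - 1) = ((x + 1) ^ (-β) - x ^ (-β)) / (x + 1 - x) := hceq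
    rw [show x + 1 - x = 1 by ring, div_one] at this
    linarith
  have e1 : c ^ (-β - 1) ≤ x ^ (-β - 1) :=
    Real.rpow_le_rpow_of_nonpos hx hc.1.le (by linarith)
  have e2 : (x + 1) ^ (-β - 1) ≤ c ^ (-β - 1) :=
    Real.rpow_le_rpow_of_nonpos hc0 hc.2.le (by linarith)
  constructor
  · rw [key, show -(1 + β) = -β - 1 by ring]
    exact mul_le_mul_of_nonneg_left e2 hβ.le
  · rw [key, show -(1 + β) = -β - 1 by ring]
    exact mul_le_mul_of_nonneg_left e1 hβ.le

/-- Telescoping sum. -/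
lemma telescope_hasSum {β : ℝ} (hβ : 0 < β) {x : ℝ} (hx : 0 < x) :
    HasSum (fun n : ℕ => ((n : ℝ) + x) ^ (-β) - ((n : ℝ) + x + 1) ^ (-β)) (x ^ (-β)) := by
  have hnonneg : ∀ n : ℕ, 0 ≤ ((n : ℝ) + x) ^ (-β) - ((n : ℝ) + x + 1) ^ (-β) := by
    intro n
    have : ((n : ℝ) + x + 1) ^ (-β) ≤ ((n : ℝ) + x) ^ (-β) :=
      Real.rpow_le_rpow_of_nonpos (by positivity) (by linarith) (by linarith)
    linarith
  rw [hasSum_iff_tendsto_nat_of_nonneg hnonneg]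
  have hsum : ∀ n : ℕ, ∑ i ∈ range n, (((i : ℝ) + x) ^ (-β) - ((i : ℝ) + x + 1) ^ (-β))
      = x ^ (-β) - ((n : ℝ) + x) ^ (-β) := by
    intro n
    have := Finset.sum_range_sub' (fun i : ℕ => ((i : ℝ) + x) ^ (-β)) n
    simp only [Nat.cast_zero, zero_add] at this
    rw [← this]
    apply Finset.sum_congr rfl
    intro i _
    push_cast
    ring_nf
  simp only [hsum]
  have : Tendsto (fun n : ℕ => ((n : ℝ) + x) ^ (-β)) atTop (𝓝 0) :=
    (tendsto_rpow_neg_atTop hβ).comp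
      (tendsto_atTop_add_const_right atTop x tendsto_natCast_atTop_atTop)
  simpa using (tendsto_const_nhds.sub this)

lemma summable_shift {β : ℝ} (hβ : 0 < β) {x : ℝ} (hx : 1 ≤ x) :
    Summable (fun n : ℕ => ((n : ℝ) + x) ^ (-(1 + β))) := by
  have h1 : Summable (fun n : ℕ => ((n : ℝ) + 1) ^ (-(1 + β))) := by
    have := Real.summable_nat_rpow (p := -(1 + β)).mpr (by linarith)
    rw [← summable_nat_add_iff 1] at this
    simpa using this
  apply h1.of_nonneg_of_le (fun n => by positivity)
  intro n
  exact Real.rpow_le_rpow_of_nonpos (by positivity) (by linarith) (by linarith)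

lemma Z_bounds {β : ℝ} (hβ : 0 < β) {Z : ℝ → ℝ}
    (hZ : ∀ a : ℝ, 1 ≤ a → Z a = ∑' n : ℕ, ((n : ℝ) + a) ^ (-(1 + β)))
    {x : ℝ} (hx : 1 ≤ x) :
    x ^ (-β) / β ≤ Z x ∧ Z x ≤ x ^ (-β) / β + x ^ (-(1 + β)) := by
  have hx0 : (0 : ℝ) < x := by linarith
  have hs := summable_shift hβ hx
  have htel := (telescope_hasSum hβ hx0).div_const β
  constructor
  · rw [hZ x hx]
    refine hasSum_le ?_ htel hs.hasSum
    intro n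
    have := (mvt_rpow hβ (x := (n : ℝ) + x) (by positivity)).2
    rw [div_le_iff₀ hβ]
    linarith [this]
  · rw [hZ x hx, Summable.tsum_eq_zero_add hs]
    have h0 : ((0 : ℕ) : ℝ) + x = x := by push_cast; ring
    rw [h0]
    have hshift : Summable (fun n : ℕ => ((↑(n + 1) : ℝ) + x) ^ (-(1 + β))) :=
      (summable_nat_add_iff 1).mpr hs
    have hle : ∑' n : ℕ, ((↑(n + 1) : ℝ) + x) ^ (-(1 + β)) ≤ x ^ (-β) / β := by
      refine hasSum_le ?_ hshift.hasSum htel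
      intro n
      have := (mvt_rpow hβ (x := (n : ℝ) + x) (by positivity)).1
      rw [le_div_iff₀ hβ]
      push_cast
      rw [show (n:ℝ) + 1 + x = (n:ℝ) + x + 1 by ring, mul_comm]
      linarith
    linarith [hle]

lemma Z_pos {β : ℝ} (hβ : 0 < β) {Z : ℝ → ℝ}
    (hZ : ∀ a : ℝ, 1 ≤ a → Z a = ∑' n : ℕ, ((n : ℝ) + a) ^ (-(1 + β)))
    {x : ℝ} (hx : 1 ≤ x) : 0 < Z x := by
  have h := (Z_bounds hβ hZ hx).1
  have : 0 < x ^ (-β) / β := by positivity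
  linarith

lemma Z_asymp {β : ℝ} (hβ : 0 < β) {Z : ℝ → ℝ}
    (hZ : ∀ a : ℝ, 1 ≤ a → Z a = ∑' n : ℕ, ((n : ℝ) + a) ^ (-(1 + β))) :
    Tendsto (fun x : ℝ => x ^ β * Z x) atTop (𝓝 (1 / β)) := by
  have lo : ∀ᶠ x : ℝ in atTop, 1 / β ≤ x ^ β * Z x := by
    filter_upwards [eventually_ge_atTop (1 : ℝ)] with x hx
    have hx0 : (0 : ℝ) < x := by linarith
    have h := (Z_bounds hβ hZ hx).1
    have key : x ^ β * (x ^ (-β) / β) = 1 / β := by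
      rw [mul_div_assoc', ← Real.rpow_add hx0]
      simp
    calc 1 / β = x ^ β * (x ^ (-β) / β) := key.symm
      _ ≤ x ^ β * Z x := by
        apply mul_le_mul_of_nonneg_left h (by positivity)
  have hi : ∀ᶠ x : ℝ in atTop, x ^ β * Z x ≤ 1 / β + x⁻¹ := by
    filter_upwards [eventually_ge_atTop (1 : ℝ)] with x hx
    have hx0 : (0 : ℝ) < x := by linarith
    have h := (Z_bounds hβ hZ hx).2
    have key : x ^ β * (x ^ (-β) / β + x ^ (-(1 + β))) = 1 / β + x⁻¹ := by
      rw [mul_add, mul_div_assoc', ← Real.rpow_add hx0, ← Real.rpow_add hx0]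
      norm_num
      exact Real.rpow_neg_one x
    calc x ^ β * Z x ≤ x ^ β * (x ^ (-β) / β + x ^ (-(1 + β))) :=
        mul_le_mul_of_nonneg_left h (by positivity)
      _ = 1 / β + x⁻¹ := key
  have hlim : Tendsto (fun x : ℝ => 1 / β + x⁻¹) atTop (𝓝 (1 / β)) := by
    simpa using (tendsto_const_nhds (α := ℝ) (x := 1/β)).add tendsto_inv_atTop_zero
  exact tendsto_of_tendsto_of_tendsto_of_le_of_le' tendsto_const_nhds hlim lo hi

lemma Z_asymp_nat {β : ℝ} (hβ : 0 < β) {Z : ℝ → ℝ}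
    (hZ : ∀ a : ℝ, 1 ≤ a → Z a = ∑' n : ℕ, ((n : ℝ) + a) ^ (-(1 + β))) :
    Tendsto (fun k : ℕ => (k : ℝ) ^ β * Z k) atTop (𝓝 (1 / β)) :=
  (Z_asymp hβ hZ).comp tendsto_natCast_atTop_atTop

lemma Z_asymp_nat' {β : ℝ} (hβ : 0 < β) {Z : ℝ → ℝ}
    (hZ : ∀ a : ℝ, 1 ≤ a → Z a = ∑' n : ℕ, ((n : ℝ) + a) ^ (-(1 + β))) :
    Tendsto (fun k : ℕ => (k : ℝ) ^ β * Z ((k : ℝ) + 1)) atTop (𝓝 (1 / β)) := by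
  have h1 : Tendsto (fun k : ℕ => ((k : ℝ) + 1) ^ β * Z ((k : ℝ) + 1)) atTop (𝓝 (1 / β)) := by
    have := (Z_asymp hβ hZ).comp
      (tendsto_atTop_add_const_right atTop (1 : ℝ) tendsto_natCast_atTop_atTop)
    exact this
  have h2 : Tendsto (fun k : ℕ => ((k : ℝ) / ((k : ℝ) + 1)) ^ β) atTop (𝓝 1) := by
    have hd : Tendsto (fun k : ℕ => (k : ℝ) / ((k : ℝ) + 1)) atTop (𝓝 1) := by
      simpa using tendsto_natCast_div_add_atTop (1 : ℝ)
    have := (Real.continuousAt_rpow_const 1 β (Or.inl one_ne_zero)).tendsto.comp hd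
    simpa [Function.comp_def] using this
  have := h2.mul h1
  rw [one_mul] at this
  refine this.congr fun k => ?_
  have hk1 : (0:ℝ) < (k:ℝ) + 1 := by positivity
  rw [Real.div_rpow (by positivity) hk1.le]
  field_simp

lemma b_asymp {β : ℝ} (hβ : 1 < β) :
    Tendsto (fun k : ℕ => (((k : ℝ) + 1) ^ (β - 1) - (k : ℝ) ^ (β - 1)) / (k : ℝ) ^ (β - 2))
      atTop (𝓝 (β - 1)) := by
  have hd : HasDerivAt (fun x : ℝ => x ^ (β - 1)) (β - 1) 1 := by
    have := Real.hasDerivAt_rpow_const (x := (1 : ℝ)) (p := β - 1) (Or.inl one_ne_zero)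
    simpa using this
  rw [hasDerivAt_iff_tendsto_slope] at hd
  have hu : Tendsto (fun k : ℕ => 1 + 1 / (k : ℝ)) atTop (𝓝[≠] 1) := by
    apply tendsto_nhdsWithin_of_tendsto_nhds_of_eventually_within
    · have : Tendsto (fun k : ℕ => 1 / (k : ℝ)) atTop (𝓝 0) :=
        tendsto_one_div_atTop_nhds_zero_nat
      simpa using (tendsto_const_nhds (x := (1:ℝ))).add this
    · filter_upwards [eventually_ge_atTop 1] with k hk
      have hk0 : (0 : ℝ) < (k : ℝ) := by exact_mod_cast hk
      have : 0 < 1 / (k : ℝ) := by positivity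
      simp only [Set.mem_compl_iff, Set.mem_singleton_iff]
      intro h
      nlinarith
  have := hd.comp hu
  refine this.congr' ?_
  filter_upwards [eventually_ge_atTop 1] with k hk
  have hk0 : (0 : ℝ) < (k : ℝ) := by exact_mod_cast hk
  have hk1 : (0 : ℝ) < (k : ℝ) + 1 := by linarith
  simp only [Function.comp_apply, slope_def_field]
  rw [show (1 : ℝ) + 1 / (k : ℝ) = ((k : ℝ) + 1) / (k : ℝ) by field_simp]
  rw [Real.div_rpow hk1.le hk0.le, Real.one_rpow]
  have e1 : (k : ℝ) ^ (β - 1) ≠ 0 := by positivity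
  have e2 : (k : ℝ) ^ (β - 2) ≠ 0 := by positivity
  have key : (k : ℝ) ^ (β - 2) * (k : ℝ) = (k : ℝ) ^ (β - 1) := by
    rw [← Real.rpow_add_one hk0.ne']
    norm_num
    ring_nf
  field_simp
  linear_combination (((k:ℝ) + 1) ^ (β - 1) - (k:ℝ) ^ (β-1)) * key

/-- For `β > 1`, the immediate impact
`𝓘_t = R₀⁺ + R₁⁺ + ∑_{k=2}^{t−1} R_k⁺` with
`R_k⁺ = (1/k^{2+β})·Z(1)/(Z(k)·Z(k+1))·R₁⁺` satisfies
`lim_{t→∞} 𝓘_t / t^{β−1} = β²·Z(1)·R₁⁺/(β − 1)`, i.e. `𝓘_t` grows like `t^{β−1}`. -/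
theorem stmt_14 (β : ℝ) (hβ : 1 < β)
    (Z : ℝ → ℝ)
    (hZ : ∀ a : ℝ, 1 ≤ a → Z a = ∑' n : ℕ, ((n : ℝ) + a) ^ (-(1 + β)))
    (R₀ R₁ : ℝ) (hR₁ : 0 < R₁) (Rp : ℕ → ℝ)
    (hRp : ∀ k : ℕ, 2 ≤ k →
      Rp k = (1 / (k : ℝ) ^ (2 + β)) * (Z 1 / (Z k * Z ((k : ℝ) + 1))) * R₁)
    (I : ℕ → ℝ)
    (hI : ∀ t : ℕ, I t = R₀ + R₁ + ∑ k ∈ Finset.Icc 2 (t - 1), Rp k) :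
    Filter.Tendsto (fun t : ℕ => I t / (t : ℝ) ^ (β - 1))
      Filter.atTop (nhds (β ^ 2 * Z 1 * R₁ / (β - 1))) := by
  have hβ0 : (0 : ℝ) < β := by linarith
  set c : ℝ := β ^ 2 * Z 1 * R₁ / (β - 1) with hc
  set b : ℕ → ℝ := fun k => ((k : ℝ) + 1) ^ (β - 1) - (k : ℝ) ^ (β - 1) with hb
  set f : ℕ → ℝ := fun k => if 2 ≤ k then Rp k else 0 with hf
  have hbpos : ∀ k, 0 < b k := fun k =>
    sub_pos.mpr (Real.rpow_lt_rpow (Nat.cast_nonneg k) (by linarith) (by linarith))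
  have hbsum : ∀ n : ℕ, ∑ i ∈ range n, b i = (n : ℝ) ^ (β - 1) := by
    intro n
    have h := Finset.sum_range_sub (fun i : ℕ => ((i : ℝ)) ^ (β - 1)) n
    simp only [Nat.cast_zero, Real.zero_rpow (by linarith : β - 1 ≠ 0), sub_zero] at h
    rw [← h]
    apply Finset.sum_congr rfl
    intro i _
    push_cast
    rfl
  have hT : Tendsto (fun n : ℕ => (n : ℝ) ^ (β - 1)) atTop atTop :=
    (tendsto_rpow_atTop (by linarith)).comp tendsto_natCast_atTop_atTop
  have hbtend : Tendsto (fun n : ℕ => ∑ i ∈ range n, b i) atTop atTop := by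
    simpa only [hbsum] using hT
  -- asymptotics of f
  have hRasymp : Tendsto (fun k : ℕ => f k / (k : ℝ) ^ (β - 2)) atTop
      (𝓝 (β ^ 2 * Z 1 * R₁)) := by
    have hden := (Z_asymp_nat hβ0 hZ).mul (Z_asymp_nat' hβ0 hZ)
    have hne : (1 / β) * (1 / β) ≠ 0 := by positivity
    have hmain := (tendsto_const_nhds (x := Z 1 * R₁)).div hden hne
    have hval : Z 1 * R₁ / (1 / β * (1 / β)) = β ^ 2 * Z 1 * R₁ := by
      field_simp
    rw [hval] at hmain
    refine hmain.congr' ?_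
    filter_upwards [eventually_ge_atTop 2] with k hk
    have hK0 : (0 : ℝ) < (k : ℝ) := by exact_mod_cast Nat.lt_of_lt_of_le (by norm_num) hk
    have hK1 : (1 : ℝ) ≤ (k : ℝ) := by exact_mod_cast Nat.one_le_iff_ne_zero.mpr (by omega)
    have hZk : 0 < Z k := Z_pos hβ0 hZ hK1
    have hZk1 : 0 < Z ((k : ℝ) + 1) := Z_pos hβ0 hZ (by linarith)
    have hK2 : (k : ℝ) ^ (2 + β) * (k : ℝ) ^ (β - 2) = (k : ℝ) ^ β * (k : ℝ) ^ β := by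
      rw [← Real.rpow_add hK0, ← Real.rpow_add hK0]
      ring_nf
    have hPβ : (0:ℝ) < (k : ℝ) ^ β := by positivity
    have hP2 : (0:ℝ) < (k : ℝ) ^ (2 + β) := by positivity
    have hP3 : (0:ℝ) < (k : ℝ) ^ (β - 2) := by positivity
    simp only [Pi.div_apply]
    rw [show f k = Rp k from if_pos hk, hRp k hk]
    rw [div_eq_div_iff (by positivity) (by positivity)]
    field_simp
    linear_combination (Z 1) * hK2
  -- f k / b k → c
  have hflim : Tendsto (fun k : ℕ => f k / b k) atTop (𝓝 c) := by
    have := hRasymp.div (b_asymp hβ) (by intro h; exact absurd h (by linarith))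
    refine this.congr' ?_
    filter_upwards [eventually_ge_atTop 1] with k hk
    have hK0 : (0 : ℝ) < (k : ℝ) := by exact_mod_cast hk
    have hP : ((k : ℝ) ^ (β - 2)) ≠ 0 := by positivity
    simp only [Pi.div_apply]
    rw [div_div_div_cancel_right₀ hP]
  -- little-o
  have hlittle : (fun k => f k - c * b k) =o[atTop] b := by
    rw [isLittleO_iff_tendsto (fun k h => absurd h (hbpos k).ne')]
    have : Tendsto (fun k : ℕ => f k / b k - c) atTop (𝓝 (c - c)) :=
      hflim.sub tendsto_const_nhds
    rw [sub_self] at this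
    refine this.congr fun k => ?_
    rw [sub_div, mul_div_assoc, div_self (hbpos k).ne', mul_one]
  have hsum_little := hlittle.sum_range (fun i => (hbpos i).le) hbtend
  have htend0 : Tendsto
      (fun n : ℕ => ((∑ i ∈ range n, f i) - c * (n : ℝ) ^ (β - 1)) / (n : ℝ) ^ (β - 1))
      atTop (𝓝 0) := by
    have h := hsum_little.tendsto_div_nhds_zero
    refine h.congr fun n => ?_
    rw [Finset.sum_sub_distrib, ← Finset.mul_sum, hbsum]
  have hconst : Tendsto (fun n : ℕ => (R₀ + R₁) / (n : ℝ) ^ (β - 1)) atTop (𝓝 0) :=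
    tendsto_const_nhds.div_atTop hT
  have hIcc : ∀ t : ℕ, ∑ k ∈ Finset.Icc 2 (t - 1), Rp k = ∑ k ∈ range t, f k := by
    intro t
    have h1 : ∑ k ∈ range t, f k = ∑ k ∈ Finset.Ico 2 t, f k := by
      refine (Finset.sum_subset ?_ ?_).symm
      · intro k hk
        exact Finset.mem_range.mpr (Finset.mem_Ico.mp hk).2
      · intro k _ hk
        have : ¬ (2 ≤ k) := fun h2 => hk (Finset.mem_Ico.mpr ⟨h2, Finset.mem_range.mp ‹_›⟩)
        simp [hf, this]
    rw [h1]
    rcases t with _ | n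
    · simp
    · rw [show n + 1 - 1 = n from rfl, ← Finset.Ico_add_one_right_eq_Icc]
      apply Finset.sum_congr rfl
      intro k hk
      exact (if_pos (Finset.mem_Ico.mp hk).1).symm
  have hfinal := (hconst.add htend0).add (tendsto_const_nhds (x := c))
  rw [add_zero, zero_add] at hfinal
  refine hfinal.congr' ?_
  filter_upwards [eventually_ge_atTop 1] with t ht
  have hK0 : (0 : ℝ) < (t : ℝ) := by exact_mod_cast ht
  have hTne : ((t : ℝ) ^ (β - 1)) ≠ 0 := by positivity
  rw [hI t, hIcc t]
  field_simp
  ring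
end

section
/- Let β = 1, Z(a) = Σ_{n=0}^{∞} (n + a)^{−2} for real a ≥ 1, R₀⁺ ∈ ℝ, R₁⁺ > 0, and for k ≥ 2 let R_k⁺ = (1/k³) · Z(1)/(Z(k)·Z(k+1)) · R₁⁺. Define 𝓘_t = R₀⁺ + R₁⁺ + Σ_{k=2}^{t−1} R_k⁺. Then lim_{t→∞} 𝓘_t / log t = Z(1)·R₁⁺ = ζ(2)·R₁⁺; in particular 𝓘_t grows logarithmically. -/
open Filter Real

private lemma log_diff_le (x : ℝ) (hx : 0 < x) : Real.log (x+1) - Real.log x ≤ 1/x := by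
  have h := Real.log_le_sub_one_of_pos (show (0:ℝ) < (x+1)/x by positivity)
  rw [Real.log_div (by positivity) hx.ne'] at h
  have : (x+1)/x - 1 = 1/x := by field_simp; ring
  linarith

private lemma le_log_diff (x : ℝ) (hx : 0 < x) : 1/(x+1) ≤ Real.log (x+1) - Real.log x := by
  have h := Real.log_le_sub_one_of_pos (show (0:ℝ) < x/(x+1) by positivity)
  rw [Real.log_div hx.ne' (by positivity)] at h
  have : x/(x+1) - 1 = -(1/(x+1)) := by field_simp; ring
  linarith

private lemma telescope (c : ℝ) (hc : 0 < c) :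
    HasSum (fun n : ℕ => 1/((n:ℝ)+c) - 1/((n:ℝ)+c+1)) (1/c) := by
  have hnn : ∀ n : ℕ, 0 ≤ 1/((n:ℝ)+c) - 1/((n:ℝ)+c+1) := by
    intro n
    have h1 : (0:ℝ) < (n:ℝ)+c := by positivity
    have := one_div_le_one_div_of_le h1 (show (n:ℝ)+c ≤ (n:ℝ)+c+1 by linarith)
    linarith
  rw [hasSum_iff_tendsto_nat_of_nonneg hnn]
  have hsum : ∀ N : ℕ, ∑ n ∈ Finset.range N, (1/((n:ℝ)+c) - 1/((n:ℝ)+c+1))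
      = 1/c - 1/((N:ℝ)+c) := by
    intro N
    have h := Finset.sum_range_sub' (f := fun n : ℕ => 1/((n:ℝ)+c)) N
    have : ∑ n ∈ Finset.range N, (1/((n:ℝ)+c) - 1/((n:ℝ)+c+1))
        = ∑ n ∈ Finset.range N, ((fun n : ℕ => 1/((n:ℝ)+c)) n
          - (fun n : ℕ => 1/((n:ℝ)+c)) (n+1)) := by
      refine Finset.sum_congr rfl fun n _ => ?_
      push_cast; ring_nf
    rw [this, h]; simp
  have : Filter.Tendsto (fun N : ℕ => 1/c - 1/((N:ℝ)+c)) atTop (nhds (1/c)) := by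
    have h0 : Filter.Tendsto (fun N : ℕ => 1/((N:ℝ)+c)) atTop (nhds 0) := by
      have h := (tendsto_atTop_add_const_right atTop c
        (tendsto_natCast_atTop_atTop (R := ℝ))).inv_tendsto_atTop
      simpa [one_div, Pi.inv_def] using h
    simpa using tendsto_const_nhds.sub h0
  exact this.congr (fun N => (hsum N).symm)

private lemma rpow_neg_two_eq (x : ℝ) (hx : 0 < x) : x ^ (-(2:ℝ)) = 1/x^2 := by
  rw [show (-(2:ℝ)) = ((-2 : ℤ) : ℝ) by norm_num, Real.rpow_intCast]
  simp [zpow_neg, one_div]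

private lemma Zbnd {Z : ℝ → ℝ}
    (hZ : ∀ a : ℝ, 1 ≤ a → Z a = ∑' n : ℕ, ((n : ℝ) + a) ^ (-(2 : ℝ)))
    (c : ℝ) (hc : 2 ≤ c) : 1/c ≤ Z c ∧ Z c ≤ 1/(c-1) := by
  have hc0 : (0:ℝ) < c := by linarith
  have hZc : Z c = ∑' n : ℕ, 1/((n:ℝ)+c)^2 := by
    rw [hZ c (by linarith)]
    exact tsum_congr fun n => rpow_neg_two_eq _ (by positivity)
  have hup := telescope (c-1) (by linarith)
  have hlo := telescope c hc0
  have hple : ∀ n : ℕ, 1/((n:ℝ)+c) - 1/((n:ℝ)+c+1) ≤ 1/((n:ℝ)+c)^2 := by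
    intro n
    have hx : (0:ℝ) < (n:ℝ)+c := by positivity
    have e : 1/((n:ℝ)+c) - 1/((n:ℝ)+c+1) = 1/(((n:ℝ)+c)*((n:ℝ)+c+1)) := by
      field_simp; ring
    rw [e]
    apply one_div_le_one_div_of_le (by positivity)
    nlinarith
  have hpge : ∀ n : ℕ, 1/((n:ℝ)+c)^2 ≤ 1/((n:ℝ)+(c-1)) - 1/((n:ℝ)+(c-1)+1) := by
    intro n
    have hx : (0:ℝ) < (n:ℝ)+c := by positivity
    have hx1 : (0:ℝ) < (n:ℝ)+c-1 := by
      have : (0:ℝ) ≤ (n:ℝ) := Nat.cast_nonneg n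
      linarith
    have e : 1/((n:ℝ)+(c-1)) - 1/((n:ℝ)+(c-1)+1) = 1/((((n:ℝ)+c-1))*((n:ℝ)+c)) := by
      rw [show (n:ℝ)+(c-1)+1 = (n:ℝ)+c by ring, show (n:ℝ)+(c-1) = (n:ℝ)+c-1 by ring]
      field_simp; ring
    rw [e]
    apply one_div_le_one_div_of_le (by positivity)
    nlinarith
  have hnn : ∀ n : ℕ, 0 ≤ 1/((n:ℝ)+c)^2 := fun n => by positivity
  have hS : Summable (fun n : ℕ => 1/((n:ℝ)+c)^2) :=
    Summable.of_nonneg_of_le hnn hpge hup.summable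
  constructor
  · rw [hZc, ← hlo.tsum_eq]
    exact Summable.tsum_le_tsum hple hlo.summable hS
  · rw [hZc, ← hup.tsum_eq]
    exact Summable.tsum_le_tsum hpge hS hup.summable

private lemma harm_up : ∀ m : ℕ, 1 ≤ m →
    ∑ k ∈ Finset.Icc 2 m, (1:ℝ)/k ≤ Real.log m := by
  intro m hm
  induction m, hm using Nat.le_induction with
  | base => simp
  | succ m hm ih =>
    have hm0 : (0:ℝ) < (m:ℝ) := by exact_mod_cast hm
    rw [Finset.sum_Icc_succ_top (by omega)]
    have h := le_log_diff (m:ℝ) hm0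
    push_cast
    push_cast at ih
    linarith

private lemma harm_lo : ∀ m : ℕ, 1 ≤ m →
    Real.log ((m:ℝ)+1) - Real.log 2 ≤ ∑ k ∈ Finset.Icc 2 m, (1:ℝ)/k := by
  intro m hm
  induction m, hm using Nat.le_induction with
  | base => norm_num
  | succ m hm ih =>
    have hm0 : (0:ℝ) < (m:ℝ)+1 := by positivity
    rw [Finset.sum_Icc_succ_top (by omega)]
    have h := log_diff_le ((m:ℝ)+1) hm0
    push_cast
    linarith

private lemma sq_up : ∀ m : ℕ, 1 ≤ m →
    ∑ k ∈ Finset.Icc 2 m, (1:ℝ)/(k:ℝ)^2 ≤ 1 - 1/m := by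
  intro m hm
  induction m, hm using Nat.le_induction with
  | base => simp
  | succ m hm ih =>
    have hm0 : (0:ℝ) < (m:ℝ) := by exact_mod_cast hm
    rw [Finset.sum_Icc_succ_top (by omega)]
    have key : (1:ℝ)/((m:ℝ)+1)^2 ≤ 1/(m:ℝ) - 1/((m:ℝ)+1) := by
      have e : 1/(m:ℝ) - 1/((m:ℝ)+1) = 1/((m:ℝ)*((m:ℝ)+1)) := by field_simp; ring
      rw [e]
      apply one_div_le_one_div_of_le (by positivity)
      nlinarith
    push_cast
    linarith

private lemma auxlim (c d : ℝ) :
    Filter.Tendsto (fun t : ℕ => (c + d * Real.log t) / Real.log t) atTop (nhds d) := by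
  have hlog : Filter.Tendsto (fun t : ℕ => Real.log t) atTop atTop :=
    Real.tendsto_log_atTop.comp tendsto_natCast_atTop_atTop
  have hinv : Filter.Tendsto (fun t : ℕ => (Real.log t)⁻¹) atTop (nhds 0) :=
    hlog.inv_tendsto_atTop
  have hbase : Filter.Tendsto (fun t : ℕ => c * (Real.log t)⁻¹ + d) atTop (nhds d) := by
    have := (hinv.const_mul c).add (tendsto_const_nhds (x := d))
    simpa using this
  apply hbase.congr'
  filter_upwards [Filter.eventually_ge_atTop 2] with t ht
  have h1 : (1:ℝ) < (t:ℝ) := by exact_mod_cast (by omega : 1 < t)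
  have hne : Real.log t ≠ 0 := ne_of_gt (Real.log_pos h1)
  field_simp


/-- In the boundary case `β = 1`, with
`Z a = ∑_{n≥0} (n+a)^{−2}`, the immediate impact
`𝓘_t = R₀⁺ + R₁⁺ + ∑_{k=2}^{t−1} R_k⁺` with
`R_k⁺ = (1/k³)·Z(1)/(Z(k)·Z(k+1))·R₁⁺` grows logarithmically:
`lim_{t→∞} 𝓘_t / log t = Z(1)·R₁⁺ = ζ(2)·R₁⁺` (with `ζ(2) = π²/6`). -/
theorem stmt_15
    (Z : ℝ → ℝ)
    (hZ : ∀ a : ℝ, 1 ≤ a → Z a = ∑' n : ℕ, ((n : ℝ) + a) ^ (-(2 : ℝ)))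
    (R₀ R₁ : ℝ) (hR₁ : 0 < R₁) (Rp : ℕ → ℝ)
    (hRp : ∀ k : ℕ, 2 ≤ k →
      Rp k = (1 / (k : ℝ) ^ 3) * (Z 1 / (Z k * Z ((k : ℝ) + 1))) * R₁)
    (I : ℕ → ℝ)
    (hI : ∀ t : ℕ, I t = R₀ + R₁ + ∑ k ∈ Finset.Icc 2 (t - 1), Rp k) :
    Filter.Tendsto (fun t : ℕ => I t / Real.log t)
        Filter.atTop (nhds (Z 1 * R₁)) ∧
      Z 1 = Real.pi ^ 2 / 6 := by
  -- Z 1 = π²/6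
  have hZ1 : Z 1 = Real.pi ^ 2 / 6 := by
    rw [hZ 1 le_rfl]
    have h := hasSum_zeta_two
    have h2 : HasSum (fun n : ℕ => (1:ℝ) / ((n:ℝ)+1) ^ 2) (Real.pi ^ 2 / 6) := by
      have h3 := (hasSum_nat_add_iff' (f := fun n : ℕ => (1:ℝ) / (n:ℝ) ^ 2) 1).2 h
      simpa using h3
    rw [show (∑' n : ℕ, ((n : ℝ) + 1) ^ (-(2 : ℝ)))
        = ∑' n : ℕ, (1:ℝ) / ((n:ℝ)+1) ^ 2 from
      tsum_congr fun n => rpow_neg_two_eq _ (by positivity)]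
    exact h2.tsum_eq
  have hZ1pos : 0 < Z 1 := by rw [hZ1]; positivity
  set d : ℝ := Z 1 * R₁ with hd
  have hdpos : 0 < d := mul_pos hZ1pos hR₁
  -- per-k bounds on Rp
  have hRpb : ∀ k : ℕ, 2 ≤ k →
      d * (1/(k:ℝ) - 1/(k:ℝ)^2) ≤ Rp k ∧ Rp k ≤ d * (1/(k:ℝ) + 1/(k:ℝ)^2) := by
    intro k hk
    have hk2 : (2:ℝ) ≤ (k:ℝ) := by exact_mod_cast hk
    have hkpos : (0:ℝ) < (k:ℝ) := by linarith
    have hZk := Zbnd hZ (k:ℝ) hk2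
    have hZk1 := Zbnd hZ ((k:ℝ)+1) (by linarith)
    have hZk1up : Z ((k:ℝ)+1) ≤ 1/(k:ℝ) := by
      have := hZk1.2; rwa [show (k:ℝ)+1-1 = (k:ℝ) by ring] at this
    have hZkpos : 0 < Z (k:ℝ) := lt_of_lt_of_le (by positivity) hZk.1
    have hZk1pos : 0 < Z ((k:ℝ)+1) := lt_of_lt_of_le (by positivity) hZk1.1
    have hPpos : 0 < Z (k:ℝ) * Z ((k:ℝ)+1) := mul_pos hZkpos hZk1pos
    have hPlo : 1/((k:ℝ)*((k:ℝ)+1)) ≤ Z (k:ℝ) * Z ((k:ℝ)+1) := by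
      have := mul_le_mul hZk.1 hZk1.1 (by positivity) hZkpos.le
      calc 1/((k:ℝ)*((k:ℝ)+1)) = (1/(k:ℝ)) * (1/((k:ℝ)+1)) := by
            rw [one_div_mul_one_div]
        _ ≤ Z (k:ℝ) * Z ((k:ℝ)+1) := mul_le_mul hZk.1 hZk1.1 (by positivity) hZkpos.le
    have hPup : Z (k:ℝ) * Z ((k:ℝ)+1) ≤ 1/(((k:ℝ)-1)*(k:ℝ)) := by
      calc Z (k:ℝ) * Z ((k:ℝ)+1) ≤ (1/((k:ℝ)-1)) * (1/(k:ℝ)) :=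
            mul_le_mul hZk.2 hZk1up hZk1pos.le (one_div_nonneg.2 (by linarith))
        _ = 1/(((k:ℝ)-1)*(k:ℝ)) := by rw [one_div_mul_one_div]
    have hQup : 1/(Z (k:ℝ) * Z ((k:ℝ)+1)) ≤ (k:ℝ)*((k:ℝ)+1) := by
      have := one_div_le_one_div_of_le (by positivity : (0:ℝ) < 1/((k:ℝ)*((k:ℝ)+1))) hPlo
      rwa [one_div_one_div] at this
    have hQlo : ((k:ℝ)-1)*(k:ℝ) ≤ 1/(Z (k:ℝ) * Z ((k:ℝ)+1)) := by
      have := one_div_le_one_div_of_le hPpos hPup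
      rwa [one_div_one_div] at this
    rw [hRp k hk, div_eq_mul_one_div (Z 1)]
    constructor
    · have key : d * (1/(k:ℝ) - 1/(k:ℝ)^2)
          = (1/(k:ℝ)^3) * (Z 1 * (((k:ℝ)-1)*(k:ℝ))) * R₁ := by
        rw [hd]; field_simp
      rw [key]
      apply mul_le_mul_of_nonneg_right _ hR₁.le
      exact mul_le_mul_of_nonneg_left (mul_le_mul_of_nonneg_left hQlo hZ1pos.le)
        (by positivity)
    · have key : d * (1/(k:ℝ) + 1/(k:ℝ)^2)
          = (1/(k:ℝ)^3) * (Z 1 * ((k:ℝ)*((k:ℝ)+1))) * R₁ := by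
        rw [hd]; field_simp
      rw [key]
      apply mul_le_mul_of_nonneg_right _ hR₁.le
      exact mul_le_mul_of_nonneg_left (mul_le_mul_of_nonneg_left hQup hZ1pos.le)
        (by positivity)
  refine ⟨?_, hZ1⟩
  apply tendsto_of_tendsto_of_tendsto_of_le_of_le'
    (auxlim (R₀ + R₁ - d * (Real.log 2 + 1)) d) (auxlim (R₀ + R₁ + d) d)
  · -- lower bound eventually
    filter_upwards [Filter.eventually_ge_atTop 3] with t ht
    have hlogpos : 0 < Real.log t :=
      Real.log_pos (by exact_mod_cast (by omega : 1 < t))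
    rw [div_le_div_iff_of_pos_right hlogpos, hI t]
    set m : ℕ := t - 1 with hmdef
    have hm1 : 1 ≤ m := by omega
    have hmt : (m:ℝ) + 1 = (t:ℝ) := by
      have : m + 1 = t := by omega
      exact_mod_cast this
    have h1 : ∑ k ∈ Finset.Icc 2 m, d * (1/(k:ℝ) - 1/(k:ℝ)^2)
        ≤ ∑ k ∈ Finset.Icc 2 m, Rp k :=
      Finset.sum_le_sum fun k hk => (hRpb k (Finset.mem_Icc.1 hk).1).1
    have h2 : ∑ k ∈ Finset.Icc 2 m, d * (1/(k:ℝ) - 1/(k:ℝ)^2)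
        = d * (∑ k ∈ Finset.Icc 2 m, (1:ℝ)/k - ∑ k ∈ Finset.Icc 2 m, (1:ℝ)/(k:ℝ)^2) := by
      rw [← Finset.sum_sub_distrib, Finset.mul_sum]
    have h3 := harm_lo m hm1
    have h4 := sq_up m hm1
    have h5 : (0:ℝ) < (m:ℝ) := by exact_mod_cast hm1
    have h6 : Real.log t - Real.log 2 - 1
        ≤ ∑ k ∈ Finset.Icc 2 m, (1:ℝ)/k - ∑ k ∈ Finset.Icc 2 m, (1:ℝ)/(k:ℝ)^2 := by
      rw [← hmt]
      have : (0:ℝ) < 1/(m:ℝ) := by positivity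
      linarith
    have h7 := mul_le_mul_of_nonneg_left h6 hdpos.le
    have e : d * (Real.log t - Real.log 2 - 1)
        = d * Real.log t - d * (Real.log 2 + 1) := by ring
    linarith [h1, h2 ▸ h7]
  · -- upper bound eventually
    filter_upwards [Filter.eventually_ge_atTop 3] with t ht
    have hlogpos : 0 < Real.log t :=
      Real.log_pos (by exact_mod_cast (by omega : 1 < t))
    rw [div_le_div_iff_of_pos_right hlogpos, hI t]
    set m : ℕ := t - 1 with hmdef
    have hm1 : 1 ≤ m := by omega
    have h1 : ∑ k ∈ Finset.Icc 2 m, Rp k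
        ≤ ∑ k ∈ Finset.Icc 2 m, d * (1/(k:ℝ) + 1/(k:ℝ)^2) :=
      Finset.sum_le_sum fun k hk => (hRpb k (Finset.mem_Icc.1 hk).1).2
    have h2 : ∑ k ∈ Finset.Icc 2 m, d * (1/(k:ℝ) + 1/(k:ℝ)^2)
        = d * (∑ k ∈ Finset.Icc 2 m, (1:ℝ)/k + ∑ k ∈ Finset.Icc 2 m, (1:ℝ)/(k:ℝ)^2) := by
      rw [← Finset.sum_add_distrib, Finset.mul_sum]
    have h3 := harm_up m hm1
    have h4 := sq_up m hm1
    have h5 : (0:ℝ) < (m:ℝ) := by exact_mod_cast hm1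
    have hlogm : Real.log m ≤ Real.log t := by
      apply Real.log_le_log (by positivity)
      exact_mod_cast (by omega : m ≤ t)
    have h6 : ∑ k ∈ Finset.Icc 2 m, (1:ℝ)/k + ∑ k ∈ Finset.Icc 2 m, (1:ℝ)/(k:ℝ)^2
        ≤ Real.log t + 1 := by
      have : (0:ℝ) < 1/(m:ℝ) := by positivity
      linarith
    have h7 := mul_le_mul_of_nonneg_left h6 hdpos.le
    have e : d * (Real.log t + 1) = d * Real.log t + d := by ring
    linarith [h1, h2 ▸ h7]
end

section
/- Let β > 1, Z(a) = Σ_{n=0}^{∞} (n + a)^{−(1+β)} for real a ≥ 1, R₀⁺ ∈ ℝ, R₁⁺ > 0, for k ≥ 2 let R_k⁺ = (1/k^{2+β})·Z(1)/(Z(k)·Z(k+1))·R₁⁺, and set 𝓘_t = R₀⁺ + R₁⁺ + Σ_{k=2}^{t−1} R_k⁺ and I_N = (1/N)·Σ_{t=1}^{N} 𝓘_t. Then lim_{N→∞} I_N / N^{β−1} = β·Z(1)·R₁⁺ / (β − 1). -/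
open Filter Finset Real

private lemma natTop : Filter.Tendsto (fun n : ℕ => (n:ℝ)) Filter.atTop Filter.atTop :=
  tendsto_natCast_atTop_atTop

private lemma sum_rpow_bounds {p : ℝ} (hp : -1 < p) (n : ℕ) (hn : 1 ≤ n) :
    (n:ℝ)^(p+1)/(p+1) - (n:ℝ)^p - 1/(p+1) ≤ ∑ k ∈ Finset.range n, (k:ℝ)^p ∧
    ∑ k ∈ Finset.range n, (k:ℝ)^p ≤ (n:ℝ)^(p+1)/(p+1) + 1 := by
  have hp1 : (0:ℝ) < p + 1 := by linarith
  have hnR : (1:ℝ) ≤ (n:ℝ) := by exact_mod_cast hn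
  rcases le_or_gt 0 p with hp0 | hp0
  · -- p ≥ 0, monotone on [0, n]
    have hmono : MonotoneOn (fun x : ℝ => x ^ p) (Set.Icc (0:ℝ) (0 + n)) := by
      intro x hx y hy hxy
      exact Real.rpow_le_rpow hx.1 hxy hp0
    have hint : (∫ x in (0:ℝ)..(0 + n : ℝ), x ^ p) = (n:ℝ)^(p+1)/(p+1) := by
      rw [zero_add, integral_rpow (Or.inl hp)]
      rw [Real.zero_rpow (by positivity)]
      ring
    have h1 := hmono.sum_le_integral
    have h2 := hmono.integral_le_sum
    rw [hint] at h1 h2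
    simp only [zero_add] at h1 h2
    constructor
    · -- lower bound
      have key : (∑ i ∈ Finset.range n, ((i:ℝ) + 1) ^ p) ≤ (∑ k ∈ Finset.range n, (k:ℝ)^p) + (n:ℝ)^p := by
        have := Finset.sum_range_succ (fun k => (k:ℝ)^p) n
        have hshift : (∑ i ∈ Finset.range n, ((i:ℝ) + 1) ^ p)
            = (∑ k ∈ Finset.range (n+1), (k:ℝ)^p) - (0:ℝ)^p := by
          rw [Finset.sum_range_succ' (fun k => (k:ℝ)^p) n]
          push_cast
          ring
        rw [hshift, this]
        have : (0:ℝ) ≤ (0:ℝ)^p := Real.rpow_nonneg le_rfl p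
        linarith
      have h2' : (n:ℝ)^(p+1)/(p+1) ≤ ∑ i ∈ Finset.range n, ((i:ℝ) + 1) ^ p := by
        calc (n:ℝ)^(p+1)/(p+1) ≤ ∑ i ∈ Finset.range n, (((i:ℕ):ℝ) + ((1:ℕ):ℝ)) ^ p := by
              convert h2 using 2 with i
              push_cast
              ring_nf
          _ = ∑ i ∈ Finset.range n, ((i:ℝ) + 1) ^ p := by push_cast; rfl
      have hnonneg : (0:ℝ) < 1/(p+1) := by positivity
      nlinarith [key, h2']
    · exact le_trans h1 (by linarith)
  · -- -1 < p < 0, antitone on [1, n]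
    have hp1 : (0:ℝ) < p + 1 := by linarith
    have hpne : p ≠ 0 := by linarith
    obtain ⟨m, rfl⟩ : ∃ m, n = m + 1 := ⟨n-1, (Nat.succ_pred_eq_of_pos hn).symm⟩
    have hanti : AntitoneOn (fun x : ℝ => x ^ p) (Set.Icc (1:ℝ) (1 + m)) := by
      intro x hx y hy hxy
      exact Real.rpow_le_rpow_of_nonpos (lt_of_lt_of_le one_pos hx.1) hxy hp0.le
    have hint : (∫ x in (1:ℝ)..(1 + m : ℝ), x ^ p) = ((1+(m:ℝ))^(p+1) - 1)/(p+1) := by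
      rw [integral_rpow (Or.inl hp), Real.one_rpow]
    have h1 := hanti.integral_le_sum
    have h2 := hanti.sum_le_integral
    rw [hint] at h1 h2
    have hS : (∑ k ∈ Finset.range (m+1), (k:ℝ)^p) = ∑ i ∈ Finset.range m, ((1:ℝ) + i) ^ p := by
      rw [Finset.sum_range_succ' (fun k => (k:ℝ)^p) m]
      push_cast
      rw [Real.zero_rpow hpne]
      simp [add_comm]
    have hS2 : (∑ i ∈ Finset.range m, ((1:ℝ) + ((i:ℝ)+1)) ^ p)
        = (∑ k ∈ Finset.range (m+1), (k:ℝ)^p) + ((m:ℝ)+1)^p - 1 := by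
      have e1 : (∑ k ∈ Finset.range (m+2), (k:ℝ)^p)
          = (∑ k ∈ Finset.range (m+1), (k:ℝ)^p) + ((m:ℝ)+1)^p := by
        rw [Finset.sum_range_succ]; push_cast; ring_nf
      have e2 : (∑ k ∈ Finset.range (m+2), (k:ℝ)^p)
          = (1:ℝ) + ∑ i ∈ Finset.range m, ((1:ℝ) + ((i:ℝ)+1)) ^ p := by
        rw [Finset.sum_range_succ' (fun k => (k:ℝ)^p) (m+1),
          Finset.sum_range_succ' (fun k => (((k+1:ℕ)):ℝ)^p) m]
        push_cast
        rw [Real.zero_rpow hpne]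
        norm_num
        simp only [show ∀ x:ℝ, (x+1+1:ℝ) = 1+(x+1) from fun x => by ring]
        ring
      linarith [e1, e2]
    have h1' : ((1+(m:ℝ))^(p+1) - 1)/(p+1) ≤ ∑ k ∈ Finset.range (m+1), (k:ℝ)^p := by
      rw [hS]; convert h1 using 2 with i; try push_cast; try ring_nf
    have h2' : (∑ k ∈ Finset.range (m+1), (k:ℝ)^p) + ((m:ℝ)+1)^p - 1
        ≤ ((1+(m:ℝ))^(p+1) - 1)/(p+1) := by
      rw [← hS2]; convert h2 using 2 with i; try push_cast; try ring_nf
    have hnn : (0:ℝ) ≤ ((m:ℝ)+1)^p := Real.rpow_nonneg (by positivity) p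
    have hq : (0:ℝ) < 1/(p+1) := by positivity
    rw [sub_div] at h1' h2'
    constructor
    all_goals push_cast
    all_goals ring_nf at h1' h2' hnn hq ⊢
    · linarith
    · linarith

private lemma rpow_neg_tendsto {q : ℝ} (hq : 0 < q) :
    Filter.Tendsto (fun n : ℕ => (n:ℝ) ^ (-q)) Filter.atTop (nhds 0) :=
  (tendsto_rpow_neg_atTop hq).comp tendsto_natCast_atTop_atTop

private lemma lemA {p : ℝ} (hp : -1 < p) :
    Filter.Tendsto (fun n : ℕ => (∑ k ∈ Finset.range n, (k:ℝ)^p) / (n:ℝ)^(p+1))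
      Filter.atTop (nhds (1/(p+1))) := by
  have hp1 : (0:ℝ) < p + 1 := by linarith
  have hL : Filter.Tendsto
      (fun n : ℕ => 1/(p+1) - (n:ℝ)^(-1:ℝ) - (1/(p+1)) * (n:ℝ)^(-(p+1)))
      Filter.atTop (nhds (1/(p+1))) := by
    have := ((tendsto_const_nhds (x := 1/(p+1)) (f := Filter.atTop (α := ℕ))).sub
      (rpow_neg_tendsto one_pos)).sub
      ((tendsto_const_nhds (x := 1/(p+1))).mul (rpow_neg_tendsto hp1))
    simpa using this
  have hU : Filter.Tendsto
      (fun n : ℕ => 1/(p+1) + (n:ℝ)^(-(p+1))) Filter.atTop (nhds (1/(p+1))) := by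
    have := (tendsto_const_nhds (x := 1/(p+1)) (f := Filter.atTop (α := ℕ))).add
      (rpow_neg_tendsto hp1)
    simpa using this
  refine tendsto_of_tendsto_of_tendsto_of_le_of_le' hL hU ?_ ?_
  · filter_upwards [Filter.eventually_ge_atTop 1] with n hn
    have hnR : (1:ℝ) ≤ (n:ℝ) := by exact_mod_cast hn
    have hn0 : (0:ℝ) < (n:ℝ) := by linarith
    have hpow : (0:ℝ) < (n:ℝ)^(p+1) := Real.rpow_pos_of_pos hn0 _
    have hb := (sum_rpow_bounds hp n hn).1
    have e1 : (n:ℝ)^(-1:ℝ) = (n:ℝ)^p/(n:ℝ)^(p+1) := by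
      rw [← Real.rpow_sub hn0]; norm_num
    have e2 : (n:ℝ)^(-(p+1)) = 1/(n:ℝ)^(p+1) := by
      rw [Real.rpow_neg hn0.le, inv_eq_one_div]
    calc 1/(p+1) - (n:ℝ)^(-1:ℝ) - (1/(p+1)) * (n:ℝ)^(-(p+1))
        = ((n:ℝ)^(p+1)/(p+1) - (n:ℝ)^p - 1/(p+1)) / (n:ℝ)^(p+1) := by
          rw [e1, e2]; field_simp; try ring
      _ ≤ (∑ k ∈ Finset.range n, (k:ℝ)^p) / (n:ℝ)^(p+1) := by gcongr
  · filter_upwards [Filter.eventually_ge_atTop 1] with n hn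
    have hnR : (1:ℝ) ≤ (n:ℝ) := by exact_mod_cast hn
    have hn0 : (0:ℝ) < (n:ℝ) := by linarith
    have hpow : (0:ℝ) < (n:ℝ)^(p+1) := Real.rpow_pos_of_pos hn0 _
    have hb := (sum_rpow_bounds hp n hn).2
    have e2 : (n:ℝ)^(-(p+1)) = 1/(n:ℝ)^(p+1) := by
      rw [Real.rpow_neg hn0.le, inv_eq_one_div]
    calc (∑ k ∈ Finset.range n, (k:ℝ)^p) / (n:ℝ)^(p+1)
        ≤ ((n:ℝ)^(p+1)/(p+1) + 1) / (n:ℝ)^(p+1) := by gcongr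
      _ = 1/(p+1) + (n:ℝ)^(-(p+1)) := by
          rw [e2, add_div]
          congr 1
          rw [div_div, mul_comm, ← div_div, div_self hpow.ne']

private lemma lemB {p c : ℝ} (hp : -1 < p) {a : ℕ → ℝ}
    (h : Filter.Tendsto (fun k : ℕ => a k / (k:ℝ)^p) Filter.atTop (nhds c)) :
    Filter.Tendsto (fun n : ℕ => (∑ k ∈ Finset.range n, a k) / (n:ℝ)^(p+1))
      Filter.atTop (nhds (c/(p+1))) := by
  have hp1 : (0:ℝ) < p + 1 := by linarith
  set g : ℕ → ℝ := fun k => (k:ℝ)^p with hg_def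
  have hg : ∀ k, 0 ≤ g k := fun k => Real.rpow_nonneg (Nat.cast_nonneg k) p
  have hA := lemA hp
  have hSg : Filter.Tendsto (fun n : ℕ => ∑ k ∈ Finset.range n, g k)
      Filter.atTop Filter.atTop := by
    have hmul := hA.pos_mul_atTop (by positivity : (0:ℝ) < 1/(p+1))
      ((tendsto_rpow_atTop hp1).comp tendsto_natCast_atTop_atTop)
    apply hmul.congr'
    filter_upwards [Filter.eventually_ge_atTop 1] with n hn
    have hn0 : (0:ℝ) < (n:ℝ) := by exact_mod_cast hn
    have hpow : (0:ℝ) < (n:ℝ)^(p+1) := Real.rpow_pos_of_pos hn0 _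
    simp only [Function.comp]
    rw [div_mul_cancel₀ _ hpow.ne']
  set f : ℕ → ℝ := fun k => a k - c * g k with hf_def
  have hfo : f =o[Filter.atTop] g := by
    rw [Asymptotics.isLittleO_iff_tendsto']
    · have h' := h.sub_const c
      rw [sub_self] at h'
      apply h'.congr'
      filter_upwards [Filter.eventually_ge_atTop 1] with k hk
      have hk0 : (0:ℝ) < (k:ℝ) := by exact_mod_cast hk
      have hgk : g k ≠ 0 := (Real.rpow_pos_of_pos hk0 p).ne'
      simp only [hf_def]
      rw [sub_div, mul_div_assoc, div_self hgk, mul_one]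
    · filter_upwards [Filter.eventually_ge_atTop 1] with k hk hk0
      have : (0:ℝ) < (k:ℝ) := by exact_mod_cast hk
      exact absurd hk0 (Real.rpow_pos_of_pos this p).ne'
  have hsum := hfo.sum_range hg hSg
  have t1 := hsum.tendsto_div_nhds_zero
  have key := (t1.mul hA).add ((tendsto_const_nhds (x := c)).mul hA)
  have hval : (0:ℝ) * (1/(p+1)) + c * (1/(p+1)) = c/(p+1) := by ring
  rw [hval] at key
  apply key.congr'
  filter_upwards [hSg.eventually_ge_atTop 1] with n hGn
  have hGne : (∑ k ∈ Finset.range n, g k) ≠ 0 := by linarith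
  have hsa : (∑ k ∈ Finset.range n, a k)
      = (∑ k ∈ Finset.range n, f k) + c * ∑ k ∈ Finset.range n, g k := by
    rw [Finset.mul_sum, ← Finset.sum_add_distrib]
    apply Finset.sum_congr rfl
    intro k _
    simp [hf_def]
  rw [hsa, add_div]
  congr 1
  rw [div_mul_div_comm, mul_comm (∑ k ∈ Finset.range n, g k), mul_div_mul_right _ _ hGne]
  rw [mul_div_assoc]

private lemma zsummable {β : ℝ} (hβ : 1 < β) {a : ℝ} (ha : 1 ≤ a) :
    Summable (fun n : ℕ => ((n : ℝ) + a) ^ (-(1 + β))) := by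
  have h1 : Summable (fun n : ℕ => ((n : ℝ) + 1) ^ (-(1 + β))) := by
    have := (Real.summable_nat_rpow (p := -(1+β))).2 (by linarith)
    have h2 := (summable_nat_add_iff 1).2 this
    apply h2.congr
    intro n
    push_cast
    ring_nf
  apply Summable.of_nonneg_of_le (fun n => Real.rpow_nonneg (by positivity) _) _ h1
  intro n
  exact Real.rpow_le_rpow_of_nonpos (by positivity) (by linarith) (by linarith)

private lemma zbounds {β : ℝ} (hβ : 1 < β) {a : ℝ} (ha : 1 ≤ a) :
    a ^ (-β)/β ≤ (∑' n : ℕ, ((n : ℝ) + a) ^ (-(1 + β))) ∧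
    (∑' n : ℕ, ((n : ℝ) + a) ^ (-(1 + β))) ≤ a ^ (-(1+β)) + a ^ (-β)/β := by
  have ha0 : (0:ℝ) < a := by linarith
  have hβ0 : (0:ℝ) < β := by linarith
  set q : ℝ := -(1+β) with hq
  have hq0 : q < 0 := by simp [hq]; linarith
  have hnonneg : ∀ n : ℕ, 0 ≤ ((n : ℝ) + a) ^ q :=
    fun n => Real.rpow_nonneg (by positivity) _
  have hsum := zsummable hβ ha
  have hanti : ∀ N : ℕ, AntitoneOn (fun x : ℝ => x ^ q) (Set.Icc a (a + N)) := by
    intro N x hx y hy hxy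
    exact Real.rpow_le_rpow_of_nonpos (lt_of_lt_of_le ha0 hx.1) hxy hq0.le
  have hint : ∀ N : ℕ, (∫ x in a..(a + N : ℝ), x ^ q)
      = (a ^ (-β) - (a + (N:ℝ)) ^ (-β))/β := by
    intro N
    have h0 : (0:ℝ) ∉ Set.uIcc a (a + N) := by
      rw [Set.uIcc_of_le (le_add_of_nonneg_right (Nat.cast_nonneg N))]
      intro h
      exact absurd (Set.mem_Icc.1 h).1 (by linarith)
    rw [integral_rpow (Or.inr ⟨by simp [hq]; try linarith, h0⟩)]
    have hq1 : q + 1 = -β := by rw [hq]; ring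
    rw [hq1]
    rw [div_neg_eq_neg_div, neg_div', neg_sub]
  have htend : Filter.Tendsto (fun N : ℕ => (a ^ (-β) - (a + (N:ℝ)) ^ (-β))/β)
      Filter.atTop (nhds (a ^ (-β)/β)) := by
    have h1 : Filter.Tendsto (fun N : ℕ => (a + (N:ℝ))) Filter.atTop Filter.atTop :=
      tendsto_atTop_add_const_left _ _ tendsto_natCast_atTop_atTop
    have h2 := (tendsto_rpow_neg_atTop hβ0).comp h1
    have := ((tendsto_const_nhds (x := a ^ (-β)) (f := Filter.atTop (α := ℕ))).sub h2).div_const β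
    simpa using this
  constructor
  · -- lower bound
    apply le_of_tendsto htend
    apply Filter.Eventually.of_forall
    intro N
    calc (a ^ (-β) - (a + (N:ℝ)) ^ (-β))/β = ∫ x in a..(a + N : ℝ), x ^ q := (hint N).symm
      _ ≤ ∑ i ∈ Finset.range N, (a + (i:ℝ)) ^ q := (hanti N).integral_le_sum
      _ = ∑ i ∈ Finset.range N, ((i:ℝ) + a) ^ q := by
          apply Finset.sum_congr rfl; intro i _; rw [add_comm]
      _ ≤ ∑' n : ℕ, ((n : ℝ) + a) ^ q :=
          Summable.sum_le_tsum _ (fun i _ => hnonneg i) hsum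
  · -- upper bound
    apply tsum_le_of_sum_range_le hnonneg
    intro n
    rcases n with _ | N
    · simp
      positivity
    · have h2 := (hanti N).sum_le_integral
      rw [hint N] at h2
      have hsplit : (∑ i ∈ Finset.range (N+1), ((i:ℝ) + a) ^ q)
          = a ^ q + ∑ i ∈ Finset.range N, (a + ((i:ℝ) + 1)) ^ q := by
        rw [Finset.sum_range_succ' (fun i => ((i:ℝ) + a) ^ q) N]
        push_cast
        rw [zero_add, add_comm]
        congr 1
        apply Finset.sum_congr rfl; intro i _; ring_nf
      rw [hsplit]
      have h2' : (∑ i ∈ Finset.range N, (a + ((i:ℝ) + 1)) ^ q)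
          ≤ (a ^ (-β) - (a + (N:ℝ)) ^ (-β))/β := by
        calc (∑ i ∈ Finset.range N, (a + ((i:ℝ) + 1)) ^ q)
            = ∑ i ∈ Finset.range N, (a + (((i:ℕ) + 1 : ℕ) : ℝ)) ^ q := by
              apply Finset.sum_congr rfl; intro i _; push_cast; ring_nf
          _ ≤ _ := h2
      have hpos : 0 ≤ (a + (N:ℝ)) ^ (-β) := Real.rpow_nonneg (by positivity) _
      have hfin : (a ^ (-β) - (a + (N:ℝ)) ^ (-β))/β ≤ a ^ (-β)/β := by
        gcongr
        linarith
      have : a ^ q = a ^ (-(1+β)) := rfl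
      linarith [h2', hfin]



/-- For `β > 1`, the permanent impact
`I_N = (1/N)·∑_{t=1}^N 𝓘_t`, where `𝓘_t = R₀⁺ + R₁⁺ + ∑_{k=2}^{t−1} R_k⁺` and
`R_k⁺ = (1/k^{2+β})·Z(1)/(Z(k)·Z(k+1))·R₁⁺`, satisfies
`lim_{N→∞} I_N / N^{β−1} = β·Z(1)·R₁⁺/(β − 1)`. -/
theorem stmt_17 (β : ℝ) (hβ : 1 < β)
    (Z : ℝ → ℝ)
    (hZ : ∀ a : ℝ, 1 ≤ a → Z a = ∑' n : ℕ, ((n : ℝ) + a) ^ (-(1 + β)))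
    (R₀ R₁ : ℝ) (hR₁ : 0 < R₁) (Rp : ℕ → ℝ)
    (hRp : ∀ k : ℕ, 2 ≤ k →
      Rp k = (1 / (k : ℝ) ^ (2 + β)) * (Z 1 / (Z k * Z ((k : ℝ) + 1))) * R₁)
    (I : ℕ → ℝ)
    (hI : ∀ t : ℕ, I t = R₀ + R₁ + ∑ k ∈ Finset.Icc 2 (t - 1), Rp k)
    (J : ℕ → ℝ)
    (hJ : ∀ N : ℕ, 1 ≤ N → J N = (1 / (N : ℝ)) * ∑ t ∈ Finset.Icc 1 N, I t) :
    Filter.Tendsto (fun N : ℕ => J N / (N : ℝ) ^ (β - 1))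
      Filter.atTop (nhds (β * Z 1 * R₁ / (β - 1))) := by
  have hβ0 : (0:ℝ) < β := by linarith
  have hb1 : (0:ℝ) < β - 1 := by linarith
  have hZb : ∀ a : ℝ, 1 ≤ a → a^(-β)/β ≤ Z a ∧ Z a ≤ a^(-(1+β)) + a^(-β)/β := by
    intro a ha; rw [hZ a ha]; exact zbounds hβ ha
  have hZpos : ∀ a : ℝ, 1 ≤ a → 0 < Z a := by
    intro a ha
    have h0 : (0:ℝ) < a := by linarith
    have h1 : (0:ℝ) < a^(-β)/β := by positivity
    linarith [(hZb a ha).1]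
  -- Z k asymptotics
  have hZk : Filter.Tendsto (fun k : ℕ => (k:ℝ)^β * Z k) Filter.atTop (nhds (1/β)) := by
    have hU : Filter.Tendsto (fun k : ℕ => (k:ℝ)^(-1:ℝ) + 1/β) Filter.atTop (nhds (1/β)) := by
      have := (rpow_neg_tendsto one_pos).add (tendsto_const_nhds (x := 1/β))
      simpa using this
    refine tendsto_of_tendsto_of_tendsto_of_le_of_le'
      (tendsto_const_nhds (x := 1/β)) hU ?_ ?_
    · filter_upwards [Filter.eventually_ge_atTop 1] with k hk
      have hk1 : (1:ℝ) ≤ (k:ℝ) := by exact_mod_cast hk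
      have hk0 : (0:ℝ) < (k:ℝ) := by linarith
      have hpow : (0:ℝ) < (k:ℝ)^β := Real.rpow_pos_of_pos hk0 _
      have e : (k:ℝ)^β * ((k:ℝ)^(-β)/β) = 1/β := by
        rw [Real.rpow_neg hk0.le, ← mul_div_assoc, mul_inv_cancel₀ hpow.ne']
      calc 1/β = (k:ℝ)^β * ((k:ℝ)^(-β)/β) := e.symm
        _ ≤ (k:ℝ)^β * Z k := by
            have := (hZb k hk1).1
            gcongr
    · filter_upwards [Filter.eventually_ge_atTop 1] with k hk
      have hk1 : (1:ℝ) ≤ (k:ℝ) := by exact_mod_cast hk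
      have hk0 : (0:ℝ) < (k:ℝ) := by linarith
      have hpow : (0:ℝ) < (k:ℝ)^β := Real.rpow_pos_of_pos hk0 _
      have e : (k:ℝ)^β * ((k:ℝ)^(-β)/β) = 1/β := by
        rw [Real.rpow_neg hk0.le, ← mul_div_assoc, mul_inv_cancel₀ hpow.ne']
      have e2 : (k:ℝ)^β * (k:ℝ)^(-(1+β)) = (k:ℝ)^(-1:ℝ) := by
        rw [← Real.rpow_add hk0]; congr 1; ring
      calc (k:ℝ)^β * Z k ≤ (k:ℝ)^β * ((k:ℝ)^(-(1+β)) + (k:ℝ)^(-β)/β) := by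
            have := (hZb k hk1).2
            gcongr
        _ = (k:ℝ)^(-1:ℝ) + 1/β := by rw [mul_add, e2, e]
  -- Z (k+1) asymptotics
  have hZk1 : Filter.Tendsto (fun k : ℕ => (k:ℝ)^β * Z ((k:ℝ)+1)) Filter.atTop (nhds (1/β)) := by
    have hshift : Filter.Tendsto (fun k : ℕ => ((k:ℝ)+1)^β * Z ((k:ℝ)+1))
        Filter.atTop (nhds (1/β)) := by
      have h := hZk.comp (tendsto_add_atTop_nat 1)
      apply h.congr
      intro k
      simp only [Function.comp]
      push_cast
      ring_nf
    have hr1 : Filter.Tendsto (fun k : ℕ => (k:ℝ)/((k:ℝ)+1)) Filter.atTop (nhds 1) := by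
      have h0 := tendsto_one_div_add_atTop_nhds_zero_nat (𝕜 := ℝ)
      have h2 := (tendsto_const_nhds (x := (1:ℝ)) (f := Filter.atTop (α := ℕ))).sub h0
      rw [sub_zero] at h2
      apply h2.congr
      intro k
      have : ((k:ℝ)+1) ≠ 0 := by positivity
      field_simp
      ring
    have hc : ContinuousAt (fun x : ℝ => x^β) 1 :=
      Real.continuousAt_rpow_const 1 β (Or.inl one_ne_zero)
    have hratio : Filter.Tendsto (fun k : ℕ => ((k:ℝ)/((k:ℝ)+1))^β) Filter.atTop (nhds 1) := by
      have := hc.tendsto.comp hr1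
      simpa [Real.one_rpow, Function.comp_def] using this
    have hmul := hratio.mul hshift
    rw [one_mul] at hmul
    apply hmul.congr'
    filter_upwards [Filter.eventually_ge_atTop 1] with k hk
    have hk1 : (1:ℝ) ≤ (k:ℝ) := by exact_mod_cast hk
    have hk0 : (0:ℝ) < (k:ℝ) := by linarith
    have hk10 : (0:ℝ) < (k:ℝ)+1 := by linarith
    have hpow1 : (0:ℝ) < ((k:ℝ)+1)^β := Real.rpow_pos_of_pos hk10 _
    rw [Real.div_rpow hk0.le hk10.le]
    field_simp
  -- Rp asymptotics
  have hRlim : Filter.Tendsto (fun k : ℕ => Rp k / (k:ℝ)^(β-2)) Filter.atTop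
      (nhds (β^2 * Z 1 * R₁)) := by
    have hden := hZk.mul hZk1
    have hne : (1/β) * (1/β) ≠ 0 := by positivity
    have hq := (tendsto_const_nhds (x := Z 1 * R₁) (f := Filter.atTop (α := ℕ))).div hden hne
    have hval : Z 1 * R₁ / (1/β * (1/β)) = β^2 * Z 1 * R₁ := by
      field_simp
    rw [hval] at hq
    apply hq.congr'
    filter_upwards [Filter.eventually_ge_atTop 2] with k hk
    have hk1 : (1:ℝ) ≤ (k:ℝ) := by exact_mod_cast (by omega : 1 ≤ k)
    have hk0 : (0:ℝ) < (k:ℝ) := by linarith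
    have hk11 : (1:ℝ) ≤ (k:ℝ)+1 := by linarith
    have hZkne := (hZpos k hk1).ne'
    have hZk1ne := (hZpos ((k:ℝ)+1) hk11).ne'
    have hp1 : (0:ℝ) < (k:ℝ)^β := Real.rpow_pos_of_pos hk0 _
    have hp2 : (0:ℝ) < (k:ℝ)^(2+β) := Real.rpow_pos_of_pos hk0 _
    have hp3 : (0:ℝ) < (k:ℝ)^(β-2) := Real.rpow_pos_of_pos hk0 _
    have e : (k:ℝ)^(2+β) * (k:ℝ)^(β-2) = (k:ℝ)^β * (k:ℝ)^β := by
      rw [← Real.rpow_add hk0, ← Real.rpow_add hk0]; congr 1; ring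
    simp only [Pi.div_apply]
    rw [hRp k hk]
    rw [div_eq_div_iff (by positivity) hp3.ne']
    field_simp
    linear_combination (Z 1) * e
  -- first summation: I t asymptotics
  have hb2 : (-1:ℝ) < β - 2 := by linarith
  have hS1 := lemB hb2 hRlim
  have he : β - 2 + 1 = β - 1 := by ring
  rw [he] at hS1
  have hC : Filter.Tendsto (fun t : ℕ => (R₀ + R₁ - Rp 0 - Rp 1) / (t:ℝ)^(β-1))
      Filter.atTop (nhds 0) := by
    have h0 := (rpow_neg_tendsto hb1).const_mul (R₀ + R₁ - Rp 0 - Rp 1)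
    rw [mul_zero] at h0
    apply h0.congr'
    filter_upwards [Filter.eventually_ge_atTop 1] with t ht
    have ht0 : (0:ℝ) < (t:ℝ) := by exact_mod_cast ht
    rw [Real.rpow_neg ht0.le, div_eq_mul_inv, mul_comm]
  have hIlim : Filter.Tendsto (fun t : ℕ => I t / (t:ℝ)^(β-1)) Filter.atTop
      (nhds (β^2 * Z 1 * R₁/(β-1))) := by
    have hsum := hC.add hS1
    rw [zero_add] at hsum
    apply hsum.congr'
    filter_upwards [Filter.eventually_ge_atTop 2] with t ht
    rw [hI t, ← add_div]
    congr 1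
    have h1 : Finset.Icc 2 (t-1) = Finset.Ico 2 t := by
      rw [← Finset.Ico_add_one_right_eq_Icc]
      congr 1
      omega
    have hsplit : ∑ k ∈ Finset.range t, Rp k = Rp 0 + Rp 1 + ∑ k ∈ Finset.Ico 2 t, Rp k := by
      rw [Finset.range_eq_Ico,
        ← Finset.sum_Ico_consecutive _ (by omega : 0 ≤ 2) (by omega : 2 ≤ t)]
      congr 1
      show ∑ k ∈ Finset.range 2, Rp k = Rp 0 + Rp 1
      rw [Finset.sum_range_succ, Finset.sum_range_one]
    rw [h1, hsplit]
    ring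
  -- second summation
  have hb0 : (-1:ℝ) < β - 1 := by linarith
  have hS2 := lemB hb0 hIlim
  have he2 : β - 1 + 1 = β := by ring
  rw [he2] at hS2
  have hS3 := hS2.comp (tendsto_add_atTop_nat 1)
  have hr1 : Filter.Tendsto (fun N : ℕ => ((N:ℝ)+1)/(N:ℝ)) Filter.atTop (nhds 1) := by
    have h0 := tendsto_one_div_atTop_nhds_zero_nat (𝕜 := ℝ)
    have h2 := (tendsto_const_nhds (x := (1:ℝ)) (f := Filter.atTop (α := ℕ))).add h0
    rw [add_zero] at h2
    apply h2.congr'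
    filter_upwards [Filter.eventually_ge_atTop 1] with N hN
    have hN0 : (0:ℝ) < (N:ℝ) := by exact_mod_cast hN
    field_simp
  have hc : ContinuousAt (fun x : ℝ => x^β) 1 :=
    Real.continuousAt_rpow_const 1 β (Or.inl one_ne_zero)
  have hratioβ : Filter.Tendsto (fun N : ℕ => (((N:ℝ)+1)/(N:ℝ))^β) Filter.atTop (nhds 1) := by
    have := hc.tendsto.comp hr1
    simpa [Real.one_rpow, Function.comp_def] using this
  have hmain0 : Filter.Tendsto (fun N : ℕ => (∑ t ∈ Finset.range (N+1), I t)/(N:ℝ)^β)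
      Filter.atTop (nhds ((β^2 * Z 1 * R₁/(β-1))/β)) := by
    have hmul := hS3.mul hratioβ
    rw [mul_one] at hmul
    apply hmul.congr'
    filter_upwards [Filter.eventually_ge_atTop 1] with N hN
    have hN0 : (0:ℝ) < (N:ℝ) := by exact_mod_cast hN
    have hN10 : (0:ℝ) < (N:ℝ)+1 := by linarith
    have hpN : (0:ℝ) < (N:ℝ)^β := Real.rpow_pos_of_pos hN0 _
    have hpN1 : (0:ℝ) < ((N:ℝ)+1)^β := Real.rpow_pos_of_pos hN10 _
    simp only [Function.comp]
    rw [Real.div_rpow hN10.le hN0.le]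
    have hcast : ((N+1:ℕ):ℝ) = (N:ℝ)+1 := by push_cast; ring
    rw [hcast]
    field_simp
  have hI0 : Filter.Tendsto (fun N : ℕ => I 0/(N:ℝ)^β) Filter.atTop (nhds 0) := by
    have h0 := (rpow_neg_tendsto hβ0).const_mul (I 0)
    rw [mul_zero] at h0
    apply h0.congr'
    filter_upwards [Filter.eventually_ge_atTop 1] with t ht
    have ht0 : (0:ℝ) < (t:ℝ) := by exact_mod_cast ht
    rw [Real.rpow_neg ht0.le, div_eq_mul_inv, mul_comm]
  have hfin := hmain0.sub hI0
  rw [sub_zero] at hfin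
  have hvalfin : (β^2 * Z 1 * R₁/(β-1))/β = β * Z 1 * R₁ / (β - 1) := by
    field_simp
  rw [hvalfin] at hfin
  apply hfin.congr'
  filter_upwards [Filter.eventually_ge_atTop 1] with N hN
  have hN0 : (0:ℝ) < (N:ℝ) := by exact_mod_cast hN
  have hpb1 : (0:ℝ) < (N:ℝ)^(β-1) := Real.rpow_pos_of_pos hN0 _
  rw [hJ N hN]
  have hsplit2 : ∑ t ∈ Finset.range (N+1), I t = I 0 + ∑ t ∈ Finset.Icc 1 N, I t := by
    rw [Finset.range_eq_Ico,
      ← Finset.sum_Ico_consecutive _ (by omega : 0 ≤ 1) (by omega : 1 ≤ N+1)]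
    congr 1
    show ∑ t ∈ Finset.range 1, I t = I 0
    rw [Finset.sum_range_one]
  have hNpow : (N:ℝ)^β = (N:ℝ) * (N:ℝ)^(β-1) := by
    have h := Real.rpow_add hN0 1 (β-1)
    rw [Real.rpow_one] at h
    rw [show (1:ℝ)+(β-1) = β by ring] at h
    exact h
  rw [hsplit2, hNpow]
  field_simp
  ring
end

section
/- Let β > 0, Z(a) = Σ_{n=0}^{∞} (n + a)^{−(1+β)} for real a ≥ 1, P_k = Z(k+1)/Z(k), and R₁⁺ ∈ ℝ. Then for every t ≥ 2 the reversion amplitude R_t⁻ := (1/t)·(P₁⋯P_{t−1})⁻¹·R₁⁺ admits the closed form R_t⁻ = (1/t)·Z(1)/Z(t)·R₁⁺, and it satisfies lim_{t→∞} t^{1−β}·R_t⁻ = β·Z(1)·R₁⁺. -/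
open Filter Topology Real Finset

private lemma aux_summable (β a : ℝ) (hβ : 0 < β) (ha : 0 < a) :
    Summable (fun n : ℕ => ((n : ℝ) + a) ^ (-(1 + β))) := by
  have h := (Real.summable_one_div_nat_add_rpow a (1 + β)).2 (by linarith)
  refine h.congr fun n => ?_
  have hna : (0 : ℝ) < (n : ℝ) + a := by positivity
  rw [abs_of_pos hna, Real.rpow_neg hna.le, one_div]

private lemma aux_mvt (β a : ℝ) (hβ : 0 < β) (ha : 0 < a) :
    β * (a + 1) ^ (-(1 + β)) ≤ a ^ (-β) - (a + 1) ^ (-β) ∧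
      a ^ (-β) - (a + 1) ^ (-β) ≤ β * a ^ (-(1 + β)) := by
  obtain ⟨c, hc, hc'⟩ := exists_hasDerivAt_eq_slope (fun x : ℝ => x ^ (-β))
    (fun x : ℝ => (-β) * x ^ (-β - 1)) (by linarith : a < a + 1)
    (by
      intro x hx
      exact (Real.continuousAt_rpow_const x (-β)
        (Or.inl (by simp only [Set.mem_Icc] at hx; nlinarith : x ≠ 0))).continuousWithinAt)
    (by
      intro x hx
      simp only [Set.mem_Ioo] at hx
      exact Real.hasDerivAt_rpow_const (Or.inl (by nlinarith : x ≠ 0)))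
  simp only [Set.mem_Ioo] at hc
  have hc0 : 0 < c := by linarith
  have hkey : a ^ (-β) - (a + 1) ^ (-β) = β * c ^ (-(1 + β)) := by
    have : (-β) * c ^ (-β - 1) = ((a + 1) ^ (-β) - a ^ (-β)) / (a + 1 - a) := hc'
    have h1 : a + 1 - a = 1 := by ring
    rw [h1, div_one] at this
    have h2 : -β - 1 = -(1 + β) := by ring
    rw [h2] at this
    linarith
  constructor
  · rw [hkey]
    have : (a + 1) ^ (-(1 + β)) ≤ c ^ (-(1 + β)) :=
      Real.rpow_le_rpow_of_nonpos hc0 hc.2.le (by linarith)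
    nlinarith
  · rw [hkey]
    have : c ^ (-(1 + β)) ≤ a ^ (-(1 + β)) :=
      Real.rpow_le_rpow_of_nonpos ha hc.1.le (by linarith)
    nlinarith

private lemma aux_hasSum (β t : ℝ) (hβ : 0 < β) (ht : 0 < t) :
    HasSum (fun n : ℕ => ((n : ℝ) + t) ^ (-β) - ((n : ℝ) + t + 1) ^ (-β)) (t ^ (-β)) := by
  rw [hasSum_iff_tendsto_nat_of_nonneg]
  · have h1 : ∀ N : ℕ, ∑ n ∈ Finset.range N,
        (((n : ℝ) + t) ^ (-β) - ((n : ℝ) + t + 1) ^ (-β)) = t ^ (-β) - ((N : ℝ) + t) ^ (-β) := by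
      intro N
      have := Finset.sum_range_sub' (fun n : ℕ => ((n : ℝ) + t) ^ (-β)) N
      simp only [Nat.cast_zero, zero_add] at this
      rw [← this]
      refine Finset.sum_congr rfl fun i _ => ?_
      congr 2
      push_cast; ring
    simp only [h1]
    have h2 : Tendsto (fun N : ℕ => ((N : ℝ) + t) ^ (-β)) atTop (𝓝 0) :=
      (tendsto_rpow_neg_atTop hβ).comp
        (tendsto_atTop_add_const_right _ t tendsto_natCast_atTop_atTop)
    simpa using tendsto_const_nhds.sub h2
  · intro n
    have hpos : (0 : ℝ) < (n : ℝ) + t := by positivity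
    have := Real.rpow_le_rpow_of_nonpos hpos (by linarith : (n : ℝ) + t ≤ (n : ℝ) + t + 1)
      (by linarith : -β ≤ 0)
    linarith

private lemma aux_bounds (β t : ℝ) (hβ : 0 < β) (ht : 1 ≤ t) :
    t ^ (-β) / β ≤ (∑' n : ℕ, ((n : ℝ) + t) ^ (-(1 + β))) ∧
      (∑' n : ℕ, ((n : ℝ) + t) ^ (-(1 + β))) ≤ t ^ (-(1 + β)) + t ^ (-β) / β := by
  have ht0 : 0 < t := by linarith
  have hsum := aux_summable β t hβ ht0
  have htele := aux_hasSum β t hβ ht0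
  constructor
  · rw [div_le_iff₀ hβ]
    have h1 : t ^ (-β) ≤ ∑' n : ℕ, β * ((n : ℝ) + t) ^ (-(1 + β)) := by
      rw [← htele.tsum_eq]
      refine Summable.tsum_le_tsum (fun n => ?_) htele.summable (hsum.mul_left β)
      have hpos : (0 : ℝ) < (n : ℝ) + t := by positivity
      exact (aux_mvt β ((n : ℝ) + t) hβ hpos).2
    rw [tsum_mul_left] at h1
    linarith [h1]
  · have hshift : Summable (fun n : ℕ => (((n : ℕ) + 1 : ℕ) : ℝ) ^ (0:ℝ) * 0 + ((n : ℝ) + 1 + t) ^ (-(1 + β))) := by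
      have := (summable_nat_add_iff 1).2 hsum
      refine this.congr fun n => ?_
      push_cast; ring_nf
    have hshift' : Summable (fun n : ℕ => ((n : ℝ) + 1 + t) ^ (-(1 + β))) := by
      refine ((summable_nat_add_iff 1).2 hsum).congr fun n => ?_
      congr 1; push_cast; ring
    have heq : (∑' n : ℕ, ((n : ℝ) + t) ^ (-(1 + β))) =
        t ^ (-(1 + β)) + ∑' n : ℕ, ((n : ℝ) + 1 + t) ^ (-(1 + β)) := by
      rw [Summable.tsum_eq_zero_add hsum]
      congr 1
      · norm_num
      · refine tsum_congr fun n => ?_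
        congr 1; push_cast; ring
    rw [heq]
    have h2 : ∑' n : ℕ, β * ((n : ℝ) + 1 + t) ^ (-(1 + β)) ≤ t ^ (-β) := by
      rw [← htele.tsum_eq]
      refine Summable.tsum_le_tsum (fun n => ?_) (hshift'.mul_left β) htele.summable
      have hpos : (0 : ℝ) < (n : ℝ) + t := by positivity
      rw [show (n : ℝ) + 1 + t = (n : ℝ) + t + 1 from by ring]
      exact (aux_mvt β ((n : ℝ) + t) hβ hpos).1
    rw [tsum_mul_left] at h2
    have h3 : ∑' n : ℕ, ((n : ℝ) + 1 + t) ^ (-(1 + β)) ≤ t ^ (-β) / β := by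
      rw [le_div_iff₀ hβ]; linarith
    linarith

/-- With `Z a = ∑_{n≥0} (n+a)^{−(1+β)}` and `P_k = Z(k+1)/Z(k)`,
the reversion amplitude `R_t⁻ = (1/t)·(P₁⋯P_{t−1})⁻¹·R₁⁺` admits the closed
form `R_t⁻ = (1/t)·Z(1)/Z(t)·R₁⁺` and satisfies
`lim_{t→∞} t^{1−β}·R_t⁻ = β·Z(1)·R₁⁺`. -/
theorem stmt_18 (β : ℝ) (hβ : 0 < β)
    (Z : ℝ → ℝ)
    (hZ : ∀ a : ℝ, 1 ≤ a → Z a = ∑' n : ℕ, ((n : ℝ) + a) ^ (-(1 + β)))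
    (P : ℕ → ℝ) (hP : ∀ k : ℕ, 1 ≤ k → P k = Z ((k : ℝ) + 1) / Z k)
    (R₁ : ℝ) (Rm : ℕ → ℝ)
    (hRm : ∀ t : ℕ, 2 ≤ t →
      Rm t = (1 / (t : ℝ)) * (∏ k ∈ Finset.Icc 1 (t - 1), P k)⁻¹ * R₁) :
    (∀ t : ℕ, 2 ≤ t → Rm t = (1 / (t : ℝ)) * (Z 1 / Z t) * R₁) ∧
      Filter.Tendsto (fun t : ℕ => (t : ℝ) ^ (1 - β) * Rm t)
        Filter.atTop (nhds (β * Z 1 * R₁)) := by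
  -- positivity of Z
  have hZpos : ∀ a : ℝ, 1 ≤ a → 0 < Z a := by
    intro a ha
    have ha0 : 0 < a := by linarith
    rw [hZ a ha]
    have := (aux_bounds β a hβ ha).1
    have h0 : 0 < a ^ (-β) / β := by positivity
    linarith
  -- telescoping product
  have hprod : ∀ n : ℕ, 1 ≤ n → (∏ k ∈ Finset.Icc 1 n, P k) = Z ((n : ℝ) + 1) / Z 1 := by
    intro n hn
    induction n, hn using Nat.le_induction with
    | base =>
      simp only [Finset.Icc_self, Finset.prod_singleton]
      rw [hP 1 le_rfl]; norm_num
    | succ n hn ih =>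
      have h0 : (0:ℝ) ≤ (n:ℝ) := Nat.cast_nonneg n
      have h1 : (0:ℝ) < Z ((n : ℝ) + 1) := hZpos _ (by linarith)
      have h2 : (0:ℝ) < Z 1 := hZpos 1 le_rfl
      rw [Finset.prod_Icc_succ_top (by omega : 1 ≤ n + 1), ih, hP (n + 1) (by omega)]
      push_cast
      field_simp
  -- closed form
  have hclosed : ∀ t : ℕ, 2 ≤ t → Rm t = (1 / (t : ℝ)) * (Z 1 / Z t) * R₁ := by
    intro t ht
    rw [hRm t ht, hprod (t - 1) (by omega)]
    have hc : ((t - 1 : ℕ) : ℝ) + 1 = (t : ℝ) := by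
      have : (1:ℕ) ≤ t := by omega
      push_cast [Nat.cast_sub this]; ring
    rw [hc, inv_div]
  refine ⟨hclosed, ?_⟩
  -- the limit
  have hZ1 : 0 < Z 1 := hZpos 1 le_rfl
  have hg : Tendsto (fun t : ℕ => (t : ℝ) ^ β * Z t) atTop (𝓝 (1 / β)) := by
    apply tendsto_of_tendsto_of_tendsto_of_le_of_le' (g := fun _ : ℕ => 1 / β)
      (h := fun t : ℕ => 1 / (t : ℝ) + 1 / β) tendsto_const_nhds
    · have := (tendsto_one_div_atTop_nhds_zero_nat).add (tendsto_const_nhds (x := 1 / β))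
      simpa using this
    · filter_upwards [eventually_ge_atTop 1] with t ht
      have ht1 : (1 : ℝ) ≤ (t : ℝ) := by exact_mod_cast ht
      have ht0 : (0 : ℝ) < (t : ℝ) := by linarith
      have hb := (aux_bounds β (t : ℝ) hβ ht1).1
      rw [hZ (t : ℝ) ht1]
      have hpow : (t : ℝ) ^ β * ((t : ℝ) ^ (-β) / β) = 1 / β := by
        rw [← mul_div_assoc, ← Real.rpow_add ht0]; simp
      calc (1:ℝ) / β = (t : ℝ) ^ β * ((t : ℝ) ^ (-β) / β) := hpow.symm
        _ ≤ (t : ℝ) ^ β * (∑' n : ℕ, ((n : ℝ) + (t:ℝ)) ^ (-(1 + β))) := by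
            apply mul_le_mul_of_nonneg_left hb (Real.rpow_nonneg ht0.le β)
    · filter_upwards [eventually_ge_atTop 1] with t ht
      have ht1 : (1 : ℝ) ≤ (t : ℝ) := by exact_mod_cast ht
      have ht0 : (0 : ℝ) < (t : ℝ) := by linarith
      have hb := (aux_bounds β (t : ℝ) hβ ht1).2
      rw [hZ (t : ℝ) ht1]
      have hpow1 : (t : ℝ) ^ β * ((t : ℝ) ^ (-(1+β))) = 1 / (t : ℝ) := by
        rw [← Real.rpow_add ht0, show β + -(1+β) = -1 from by ring, Real.rpow_neg_one, one_div]
      have hpow2 : (t : ℝ) ^ β * ((t : ℝ) ^ (-β) / β) = 1 / β := by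
        rw [← mul_div_assoc, ← Real.rpow_add ht0]; simp
      calc (t : ℝ) ^ β * (∑' n : ℕ, ((n : ℝ) + (t:ℝ)) ^ (-(1 + β)))
          ≤ (t : ℝ) ^ β * ((t:ℝ) ^ (-(1+β)) + (t:ℝ) ^ (-β) / β) := by
            apply mul_le_mul_of_nonneg_left hb (Real.rpow_nonneg ht0.le β)
        _ = 1 / (t : ℝ) + 1 / β := by rw [mul_add, hpow1, hpow2]
  have hginv : Tendsto (fun t : ℕ => ((t : ℝ) ^ β * Z t)⁻¹) atTop (𝓝 β) := by
    have := hg.inv₀ (by positivity : (1 : ℝ) / β ≠ 0)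
    simpa using this
  have hfinal : Tendsto (fun t : ℕ => Z 1 * R₁ * ((t : ℝ) ^ β * Z t)⁻¹) atTop
      (𝓝 (β * Z 1 * R₁)) := by
    have := hginv.const_mul (Z 1 * R₁)
    convert this using 2
    ring
  refine hfinal.congr' ?_
  filter_upwards [eventually_ge_atTop 2] with t ht
  have ht1 : (1 : ℝ) ≤ (t : ℝ) := by exact_mod_cast (by omega : 1 ≤ t)
  have ht0 : (0 : ℝ) < (t : ℝ) := by linarith
  have hZt : 0 < Z (t : ℝ) := hZpos _ ht1
  rw [hclosed t ht]
  have hpow : (t : ℝ) ^ (1 - β) = (t : ℝ) * (t : ℝ) ^ (-β) := by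
    rw [show (1 : ℝ) - β = 1 + (-β) by ring, Real.rpow_add ht0, Real.rpow_one]
  rw [hpow]
  have hβt : (0:ℝ) < (t : ℝ) ^ β := Real.rpow_pos_of_pos ht0 β
  have hneg : (t : ℝ) ^ (-β) = ((t : ℝ) ^ β)⁻¹ := Real.rpow_neg ht0.le β
  field_simp
  rw [hneg]
  field_simp
end
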